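/- arXiv:2310.08313 — 3 statements merged into one kernel-verified Lean document; each statement's English description precedes it below -/
import Mathlib

section
/- Let X be a polyhedral complex in R^n whose recession cones form a pointed fan Σ. The face poset of the canonical compactification of X in the tropical toric variety TΣ is isomorphic to the subposet of X × Σ consisting of pairs (σ, ρ) with ρ ⊆ RecCone(σ), where (σ', ρ') ≤ (σ, ρ) iff σ' ≤ σ in X and ρ ≤ ρ' in Σ. -/
section PolyhedralDefs

variable {V : Type*} [AddCommGroup V] [Module ℝ V]

/-- A (nonempty) polyhedron: a nonempty finite intersection of closed halfspaces. -/
def IsPolyhedron (P : Set V) : Prop :=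
  P.Nonempty ∧ ∃ s : Finset ((V →ₗ[ℝ] ℝ) × ℝ), P = {x | ∀ c ∈ s, c.1 x ≤ c.2}

/-- A polyhedral cone: a finite intersection of closed linear halfspaces. -/
def IsPolyCone (C : Set V) : Prop :=
  ∃ s : Finset (V →ₗ[ℝ] ℝ), C = {x | ∀ ℓ ∈ s, ℓ x ≤ 0}

/-- `F` is a face of the polyhedron `P`. -/
def IsFaceOf (F P : Set V) : Prop :=
  F = P ∨ ∃ (ℓ : V →ₗ[ℝ] ℝ) (c : ℝ), (∀ x ∈ P, ℓ x ≤ c) ∧ F = {x | x ∈ P ∧ ℓ x = c}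

/-- A polyhedral complex. -/
def IsPolyComplex (𝒳 : Set (Set V)) : Prop :=
  (∀ P ∈ 𝒳, IsPolyhedron P) ∧
  (∀ P ∈ 𝒳, ∀ F : Set V, IsFaceOf F P → F.Nonempty → F ∈ 𝒳) ∧
  (∀ P ∈ 𝒳, ∀ Q ∈ 𝒳, (P ∩ Q).Nonempty → IsFaceOf (P ∩ Q) P ∧ IsFaceOf (P ∩ Q) Q)

/-- A fan. -/
def IsFan (𝒞 : Set (Set V)) : Prop :=
  IsPolyComplex 𝒞 ∧ ∀ C ∈ 𝒞, IsPolyCone C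

/-- A pointed fan. -/
def IsPointedFan (𝒞 : Set (Set V)) : Prop :=
  IsFan 𝒞 ∧ ({0} : Set V) ∈ 𝒞 ∧ ∀ C ∈ 𝒞, ∀ x ∈ C, -x ∈ C → x = 0

/-- The recession cone of a subset `P`. -/
def recCone (P : Set V) : Set V :=
  {v | ∀ p ∈ P, ∀ t : ℝ, 0 ≤ t → p + t • v ∈ P}

end PolyhedralDefs

/-- The points of the tropical toric variety `TΣ`: a point of sedentarity `ρ` is a
point of the quotient `ℝⁿ / span(ρ)` of the torus orbit labelled by the cone `ρ`. -/
def TPoint (n : ℕ) : Type :=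
  Σ ρ : Set (Fin n → ℝ), (Fin n → ℝ) ⧸ Submodule.span ℝ ρ

/-- The face of the canonical compactification of `X` labelled by the pair `(σ, ρ)`
with `ρ ⊆ RecCone(σ)`: the union, over the cones `η ∈ Σ` with `ρ ⊆ η ⊆ RecCone(σ)`,
of the images of `σ` in the corresponding torus orbits `ℝⁿ / span(η)`. -/
def faceSet {n : ℕ} (S : Set (Set (Fin n → ℝ))) (σ ρ : Set (Fin n → ℝ)) :
    Set (TPoint n) :=
  {p | ∃ η ∈ S, ρ ⊆ η ∧ η ⊆ recCone σ ∧ ∃ x ∈ σ, p = ⟨η, Submodule.Quotient.mk x⟩}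

/-- The subposet of `X × Σ` consisting of the pairs `(σ, ρ)` with `ρ ⊆ RecCone(σ)`,
with order `(σ', ρ') ≤ (σ, ρ) ↔ σ' ≤ σ in X and ρ ≤ ρ' in Σ`. -/
def PairPoset {n : ℕ} (X S : Set (Set (Fin n → ℝ))) : Type :=
  {q : Set (Fin n → ℝ) × Set (Fin n → ℝ) // q.1 ∈ X ∧ q.2 ∈ S ∧ q.2 ⊆ recCone q.1}

instance PairPoset.instPartialOrder {n : ℕ} (X S : Set (Set (Fin n → ℝ))) :
    PartialOrder (PairPoset X S) where
  le a b := a.1.1 ⊆ b.1.1 ∧ b.1.2 ⊆ a.1.2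
  le_refl a := ⟨subset_rfl, subset_rfl⟩
  le_trans a b c hab hbc := ⟨hab.1.trans hbc.1, hbc.2.trans hab.2⟩
  le_antisymm a b hab hba :=
    Subtype.ext (Prod.ext (Set.Subset.antisymm hab.1 hba.1)
      (Set.Subset.antisymm hba.2 hab.2))


section AuxLemmas

variable {V : Type*} [AddCommGroup V] [Module ℝ V]

lemma aux_mem_recCone_of_ray {P : Set V} (hP : IsPolyhedron P) {p v : V}
    (hp : p ∈ P) (hray : ∀ t : ℝ, 0 ≤ t → p + t • v ∈ P) : v ∈ recCone P := by
  obtain ⟨-, s, rfl⟩ := hP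
  have hv : ∀ c ∈ s, c.1 v ≤ 0 := by
    intro c hc
    by_contra h
    push_neg at h
    have hpc : c.1 p ≤ c.2 := hp c hc
    set t : ℝ := (c.2 - c.1 p) / c.1 v + 1 with ht
    have ht0 : 0 ≤ t := by
      rw [ht]
      have : 0 ≤ (c.2 - c.1 p) / c.1 v := div_nonneg (by linarith) h.le
      linarith
    have := hray t ht0 c hc
    simp only [map_add, map_smul, smul_eq_mul] at this
    rw [ht, add_mul, div_mul_cancel₀ _ (ne_of_gt h), one_mul] at this
    linarith
  intro q hq t ht c hc
  simp only [map_add, map_smul, smul_eq_mul]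
  have := mul_nonpos_of_nonneg_of_nonpos ht (hv c hc)
  have := hq c hc
  linarith

lemma aux_zero_mem_recCone (P : Set V) : (0 : V) ∈ recCone P := by
  intro p hp t ht; simpa using hp

lemma aux_add_mem_recCone {P : Set V} {v w : V} (hv : v ∈ recCone P)
    (hw : w ∈ recCone P) : v + w ∈ recCone P := by
  intro p hp t ht
  have := hw (p + t • v) (hv p hp t ht) t ht
  simpa [smul_add, add_assoc] using this

lemma aux_smul_mem_recCone {P : Set V} {v : V} {c : ℝ} (hc : 0 ≤ c)
    (hv : v ∈ recCone P) : c • v ∈ recCone P := by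
  intro p hp t ht
  have := hv p hp (t * c) (mul_nonneg ht hc)
  simpa [smul_smul] using this

lemma aux_span_diff {ρ : Set V} (h0 : (0 : V) ∈ ρ)
    (hadd : ∀ a ∈ ρ, ∀ b ∈ ρ, a + b ∈ ρ)
    (hsmul : ∀ c : ℝ, 0 ≤ c → ∀ a ∈ ρ, c • a ∈ ρ) :
    ∀ v ∈ Submodule.span ℝ ρ, ∃ a ∈ ρ, ∃ b ∈ ρ, v = a - b := by
  intro v hv
  induction hv using Submodule.span_induction with
  | mem x hx => exact ⟨x, hx, 0, h0, by simp⟩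
  | zero => exact ⟨0, h0, 0, h0, by simp⟩
  | add x y _ _ ihx ihy =>
    obtain ⟨a, ha, b, hb, rfl⟩ := ihx
    obtain ⟨a', ha', b', hb', rfl⟩ := ihy
    exact ⟨a + a', hadd a ha a' ha', b + b', hadd b hb b' hb', by abel⟩
  | smul c x _ ih =>
    obtain ⟨a, ha, b, hb, rfl⟩ := ih
    rcases le_or_gt 0 c with h | h
    · exact ⟨c • a, hsmul c h a ha, c • b, hsmul c h b hb, by rw [smul_sub]⟩
    · refine ⟨(-c) • b, hsmul (-c) (by linarith) b hb,
        (-c) • a, hsmul (-c) (by linarith) a ha, ?_⟩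
      rw [smul_sub]; module

lemma aux_recCone_mono {P Q : Set V} (hQ : IsPolyhedron Q) (hPQ : P ⊆ Q)
    (hP : P.Nonempty) : recCone P ⊆ recCone Q := by
  intro v hv
  obtain ⟨p, hp⟩ := hP
  exact aux_mem_recCone_of_ray hQ (hPQ hp) fun t ht => hPQ (hv p hp t ht)

end AuxLemmas

/-- Let `X` be a polyhedral complex in `ℝⁿ` (containing a vertex) whose
recession cones form a pointed fan `Σ`.  The face poset of the canonical
compactification of `X` in the tropical toric variety `TΣ` (the faces being the sets
`faceSet Σ σ ρ`, ordered by inclusion) is isomorphic to the subposet of `X × Σ`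
consisting of the pairs `(σ, ρ)` with `ρ ⊆ RecCone(σ)`, where
`(σ', ρ') ≤ (σ, ρ)` iff `σ' ≤ σ` in `X` and `ρ ≤ ρ'` in `Σ`. -/
theorem face_poset_canonical_compactification {n : ℕ}
    (X S : Set (Set (Fin n → ℝ)))
    (hX : IsPolyComplex X) (hvert : ∃ σ ∈ X, ∃ x, σ = {x})
    (hS : S = {C | ∃ σ ∈ X, C = recCone σ}) (hSfan : IsPointedFan S) :
    ∃ e : PairPoset X S ≃o
        ↥{A : Set (TPoint n) | ∃ q : PairPoset X S, A = faceSet S q.1.1 q.1.2},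
      ∀ q : PairPoset X S, (e q : Set (TPoint n)) = faceSet S q.1.1 q.1.2 := by
  classical
  have key : ∀ q q' : PairPoset X S,
      faceSet S q'.1.1 q'.1.2 ⊆ faceSet S q.1.1 q.1.2 ↔ q' ≤ q := by
    rintro ⟨⟨σ, ρ⟩, hσX, hρS, hρrec⟩ ⟨⟨σ', ρ'⟩, hσ'X, hρ'S, hρ'rec⟩
    show faceSet S σ' ρ' ⊆ faceSet S σ ρ ↔ (σ' ⊆ σ ∧ ρ ⊆ ρ')
    dsimp only at hσX hρS hρrec hσ'X hρ'S hρ'rec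
    constructor
    · intro hsub
      have hρ'S' := hρ'S
      rw [hS] at hρ'S'
      obtain ⟨τ, hτX, hρ'τ⟩ := hρ'S'
      have h0 : (0 : Fin n → ℝ) ∈ ρ' := by rw [hρ'τ]; exact aux_zero_mem_recCone τ
      have hadd : ∀ a ∈ ρ', ∀ b ∈ ρ', a + b ∈ ρ' := by
        rw [hρ'τ]; intro a ha b hb; exact aux_add_mem_recCone ha hb
      have hsmul : ∀ c : ℝ, 0 ≤ c → ∀ a ∈ ρ', c • a ∈ ρ' := by
        rw [hρ'τ]; intro c hc a ha; exact aux_smul_mem_recCone hc ha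
      have hne' : σ'.Nonempty := (hX.1 σ' hσ'X).1
      have key2 : ∀ x' ∈ σ', ρ ⊆ ρ' ∧ ρ' ⊆ recCone σ ∧
          ∃ x ∈ σ, x' - x ∈ Submodule.span ℝ ρ' := by
        intro x' hx'
        have hp : (⟨ρ', Submodule.Quotient.mk x'⟩ : TPoint n) ∈ faceSet S σ' ρ' :=
          ⟨ρ', hρ'S, subset_rfl, hρ'rec, x', hx', rfl⟩
        obtain ⟨η, hηS, hρη, hηrec, x, hx, heq⟩ := hsub hp
        injection heq with h1 h2
        subst h1
        have h2' := eq_of_heq h2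
        exact ⟨hρη, hηrec, x, hx, (Submodule.Quotient.eq _).mp h2'⟩
      constructor
      · intro x' hx'
        obtain ⟨-, hρ'σ, x, hxσ, hspan⟩ := key2 x' hx'
        obtain ⟨a, ha, b, hb, hab⟩ := aux_span_diff h0 hadd hsmul _ hspan
        have hbσ' : b ∈ recCone σ' := hρ'rec hb
        have hbσ : b ∈ recCone σ := hρ'σ hb
        have haσ : a ∈ recCone σ := hρ'σ ha
        have h3 : x' + b = x + (1 : ℝ) • a := by
          have hx'eq : x' = x + (a - b) := by rw [← hab]; abel
          rw [hx'eq, one_smul]; abel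
        have hmem1 : x' + b ∈ σ ∩ σ' := by
          constructor
          · rw [h3]; exact haσ x hxσ 1 zero_le_one
          · have := hbσ' x' hx' 1 zero_le_one
            simpa using this
        have hmem2 : x' + (2 : ℝ) • b ∈ σ ∩ σ' := by
          constructor
          · have := hbσ (x' + b) hmem1.1 1 zero_le_one
            have e2 : (x' + b) + (1 : ℝ) • b = x' + (2 : ℝ) • b := by module
            rwa [e2] at this
          · exact hbσ' x' hx' 2 (by norm_num)
        obtain ⟨-, hF⟩ := hX.2.2 σ hσX σ' hσ'X ⟨x' + b, hmem1⟩
        rcases hF with hF | ⟨ℓ, c, hle, hFeq⟩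
        · rw [← hF] at hx'
          exact hx'.1
        · rw [hFeq] at hmem1 hmem2
          have e1 := hmem1.2
          have e2 := hmem2.2
          simp only [map_add, map_smul, smul_eq_mul] at e1 e2
          have hx'F : x' ∈ σ ∩ σ' := by
            rw [hFeq]; exact ⟨hx', by linarith⟩
          exact hx'F.1
      · obtain ⟨x0, hx0⟩ := hne'
        exact (key2 x0 hx0).1
    · rintro ⟨hss, hrr⟩ p ⟨η, hηS, hρ'η, hηrec, x, hxσ', rfl⟩
      exact ⟨η, hηS, hrr.trans hρ'η,
        hηrec.trans (aux_recCone_mono (hX.1 σ hσX) hss (hX.1 σ' hσ'X).1),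
        x, hss hxσ', rfl⟩
  let f : PairPoset X S →
      {A : Set (TPoint n) | ∃ q : PairPoset X S, A = faceSet S q.1.1 q.1.2} :=
    fun q => ⟨faceSet S q.1.1 q.1.2, q, rfl⟩
  have hinj : Function.Injective f := by
    intro a b h
    have h1 : faceSet S a.1.1 a.1.2 = faceSet S b.1.1 b.1.2 := congrArg Subtype.val h
    exact le_antisymm ((key b a).mp h1.le) ((key a b).mp h1.ge)
  have hsurj : Function.Surjective f := by
    rintro ⟨A, q, rfl⟩
    exact ⟨q, rfl⟩
  refine ⟨⟨Equiv.ofBijective f ⟨hinj, hsurj⟩, ?_⟩, fun q => rfl⟩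
  intro a b
  exact key b a
end

section
/- Two finite regular CW complexes whose face posets are isomorphic have homeomorphic underlying spaces; moreover the homeomorphism can be chosen to send each cell to the corresponding cell under the poset isomorphism. -/
/-- A finite regular CW complex on a topological space `X`: a finite family of
cells `cell i ⊆ X`, each with a chosen homeomorphism to a closed ball
`D^{dim i}`. -/
structure RegCW (X : Type*) [TopologicalSpace X] where
  ι : Type
  [fin : Finite ι]
  dim : ι → ℕ
  cell : ι → Set X
  inj : Function.Injective cell
  hom : ∀ i, (cell i) ≃ₜ (Metric.closedBall (0 : EuclideanSpace ℝ (Fin (dim i))) 1)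

attribute [instance] RegCW.fin

/-- The relative interior of a cell (the image of the open ball). -/
def RegCW.relint {X : Type*} [TopologicalSpace X] (C : RegCW X) (i : C.ι) : Set X :=
  Subtype.val ''
    ((C.hom i).symm ''
      {y : (Metric.closedBall (0 : EuclideanSpace ℝ (Fin (C.dim i))) 1 : Set _) |
        ‖(y : EuclideanSpace ℝ (Fin (C.dim i)))‖ < 1})

/-- The regular CW complex axioms: the relative interiors of the cells partition the
space, and each relative boundary is a union of cells of smaller dimension. -/
def RegCW.IsValid {X : Type*} [TopologicalSpace X] (C : RegCW X) : Prop :=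
  (∀ i j, i ≠ j → Disjoint (C.relint i) (C.relint j)) ∧
  (⋃ i, C.relint i) = Set.univ ∧
  ∀ i, ∃ J : Set C.ι, (∀ j ∈ J, C.dim j < C.dim i) ∧
    C.cell i \ C.relint i = ⋃ j ∈ J, C.cell j


set_option linter.unusedSectionVars false

set_option linter.unusedSectionVars false
section Real
variable {P : Type} [Fintype P] [DecidableEq P] (le : P → P → Prop)
def chainwt (w : P → ℝ) : Prop :=
  (∀ k, 0 ≤ w k) ∧ (∑ k, w k = 1) ∧ ∀ j k, w j ≠ 0 → w k ≠ 0 → le j k ∨ le k j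
def rle (i : P) : Set (P → ℝ) := {w | chainwt le w ∧ ∀ k, w k ≠ 0 → le k i}
def rlt (i : P) : Set (P → ℝ) := {w | chainwt le w ∧ ∀ k, w k ≠ 0 → le k i ∧ k ≠ i}
def rall : Set (P → ℝ) := ⋃ i, rle le i
variable {le}

theorem chainwt.le_one {w : P → ℝ} (h : chainwt le w) (k : P) : w k ≤ 1 := by
  rcases h with ⟨h0, h1, -⟩
  calc w k ≤ ∑ j, w j := Finset.single_le_sum (fun j _ => h0 j) (Finset.mem_univ k)
  _ = 1 := h1

theorem chainwt.exists_ne_zero {w : P → ℝ} (h : chainwt le w) : ∃ k, w k ≠ 0 := by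
  by_contra hc
  push_neg at hc
  have h2 : (∑ k, w k) = 0 := Finset.sum_eq_zero fun k _ => hc k
  rw [h.2.1] at h2; norm_num at h2

theorem delta_mem_rle (hrefl : ∀ a, le a a) (i : P) :
    (Pi.single i 1 : P → ℝ) ∈ rle le i := by
  refine ⟨⟨fun k => ?_, by simp [Finset.sum_pi_single'], fun j k hj hk => ?_⟩, fun k hk => ?_⟩
  · rcases eq_or_ne k i with rfl | h
    · simp
    · simp [Pi.single_apply, h]
  · have hj' : j = i := by by_contra h; simp [Pi.single_apply, h] at hj
    have hk' : k = i := by by_contra h; simp [Pi.single_apply, h] at hk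
    rw [hj', hk']; exact Or.inl (hrefl i)
  · have hk' : k = i := by by_contra h; simp [Pi.single_apply, h] at hk
    rw [hk']; exact hrefl i

theorem rle_coord_one {i : P} {w : P → ℝ} (hw : w ∈ rle le i) (h1 : w i = 1) :
    w = Pi.single i 1 := by
  have h0 : ∀ k, k ≠ i → w k = 0 := by
    intro k hk
    by_contra hne
    have hlt : w i + w k ≤ ∑ j, w j := by
      rw [← Finset.sum_pair (by exact fun h => hk h.symm : i ≠ k)]
      exact Finset.sum_le_sum_of_subset_of_nonneg (by simp) (fun j _ _ => hw.1.1 j)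
    rw [hw.1.2.1, h1] at hlt
    have h2 := hw.1.1 k
    have : 0 < w k := lt_of_le_of_ne h2 (Ne.symm hne)
    linarith
  funext k
  rcases eq_or_ne k i with rfl | h
  · simpa using h1
  · simp [Pi.single_apply, h, h0 k h]

theorem rlt_subset_rle {i : P} : rlt le i ⊆ rle le i :=
  fun w hw => ⟨hw.1, fun k hk => (hw.2 k hk).1⟩

theorem rle_coord_zero_mem_rlt {i : P} {w : P → ℝ} (hw : w ∈ rle le i) (h0 : w i = 0) :
    w ∈ rlt le i := by
  refine ⟨hw.1, fun k hk => ⟨hw.2 k hk, ?_⟩⟩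
  rintro rfl; exact hk h0

theorem rlt_coord_zero {i : P} {w : P → ℝ} (hw : w ∈ rlt le i) : w i = 0 := by
  by_contra h; exact (hw.2 i h).2 rfl

theorem rle_decomp {i : P} {w : P → ℝ} (hw : w ∈ rle le i) (h1 : w i ≠ 1) :
    (1 - w i)⁻¹ • (w - w i • (Pi.single i 1 : P → ℝ)) ∈ rlt le i ∧
      w = w i • (Pi.single i 1 : P → ℝ)
        + (1 - w i) • ((1 - w i)⁻¹ • (w - w i • (Pi.single i 1 : P → ℝ))) := by
  have hle1 := hw.1.le_one i
  have h0i := hw.1.1 i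
  have ht : 0 < 1 - w i := by
    rcases lt_or_eq_of_le hle1 with h | h
    · linarith
    · exact absurd h h1
  set z := (1 - w i)⁻¹ • (w - w i • (Pi.single i 1 : P → ℝ)) with hz
  have hzk : ∀ k, z k = if k = i then 0 else (1 - w i)⁻¹ * w k := by
    intro k
    rcases eq_or_ne k i with rfl | h
    · simp [hz]
    · simp [hz, Pi.single_apply, h]
  have hzsupp : ∀ k, z k ≠ 0 → (w k ≠ 0 ∧ k ≠ i) := by
    intro k hk
    rcases eq_or_ne k i with rfl | h
    · rw [hzk k] at hk; simp at hk
    · rw [hzk k, if_neg h] at hk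
      exact ⟨fun h' => hk (by simp [h']), h⟩
  refine ⟨⟨⟨fun k => ?_, ?_, fun j k hj hk => ?_⟩, fun k hk => ?_⟩, ?_⟩
  · rw [hzk k]
    split
    · exact le_refl 0
    · exact mul_nonneg (by positivity) (hw.1.1 k)
  · have hsum : ∑ k, z k = (1 - w i)⁻¹ * ((∑ k, w k) - w i * ∑ k, (Pi.single i 1 : P → ℝ) k) := by
      simp only [hz, Pi.smul_apply, Pi.sub_apply, smul_eq_mul, mul_sub,
        Finset.sum_sub_distrib, ← Finset.mul_sum]
    rw [hsum, hw.1.2.1, Finset.sum_pi_single']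
    simp only [Finset.mem_univ, if_pos, mul_one]
    field_simp
  · exact hw.1.2.2 j k (hzsupp j hj).1 (hzsupp k hk).1
  · exact ⟨hw.2 k (hzsupp k hk).1, (hzsupp k hk).2⟩
  · funext k
    rcases eq_or_ne k i with rfl | h
    · simp [hzk]
    · rw [Pi.add_apply, Pi.smul_apply, Pi.smul_apply, hzk k, if_neg h, Pi.single_apply, if_neg h]
      rw [smul_eq_mul, smul_eq_mul, mul_zero, zero_add]
      field_simp

theorem cone_mem_rle (hrefl : ∀ a, le a a) {i : P} {z : P → ℝ} (hz : z ∈ rlt le i)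
    {t : ℝ} (ht0 : 0 ≤ t) (ht1 : t ≤ 1) :
    (1 - t) • (Pi.single i 1 : P → ℝ) + t • z ∈ rle le i := by
  set w := (1 - t) • (Pi.single i 1 : P → ℝ) + t • z with hw
  have hwk : ∀ k, w k = (1 - t) * (Pi.single i 1 : P → ℝ) k + t * z k := fun k => rfl
  have hsupp : ∀ k, w k ≠ 0 → k = i ∨ z k ≠ 0 := by
    intro k hk
    by_contra hcon
    push_neg at hcon
    rw [hwk k, Pi.single_apply, if_neg hcon.1, hcon.2] at hk
    simp at hk
  refine ⟨⟨fun k => ?_, ?_, fun j k hj hk => ?_⟩, fun k hk => ?_⟩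
  · rw [hwk k]
    have := hz.1.1 k
    have h1 : (0:ℝ) ≤ (Pi.single i 1 : P → ℝ) k := by
      rcases eq_or_ne k i with rfl | h
      · simp
      · simp [Pi.single_apply, h]
    nlinarith
  · have : ∑ k, w k = (1 - t) * (∑ k, (Pi.single i 1 : P → ℝ) k) + t * ∑ k, z k := by
      simp only [hwk, Finset.sum_add_distrib, ← Finset.mul_sum]
    rw [this, hz.1.2.1, Finset.sum_pi_single']
    simp
  · rcases hsupp j hj with rfl | hj'
    · rcases hsupp k hk with h | hk'
      · subst h; exact Or.inl (hrefl _)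
      · exact Or.inr ((hz.2 k hk').1)
    · rcases hsupp k hk with h | hk'
      · subst h; exact Or.inl ((hz.2 j hj').1)
      · exact hz.1.2.2 j k hj' hk'
  · rcases hsupp k hk with rfl | hk'
    · exact hrefl k
    · exact (hz.2 k hk').1

theorem cone_coord_i {i : P} {z : P → ℝ} (hz : z ∈ rlt le i) (t : ℝ) :
    ((1 - t) • (Pi.single i 1 : P → ℝ) + t • z) i = 1 - t := by
  have h0 : z i = 0 := rlt_coord_zero hz
  show (1 - t) * (Pi.single i 1 : P → ℝ) i + t * z i = 1 - t
  rw [h0, Pi.single_eq_same]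
  ring

theorem cone_cancel {i : P} {z z' : P → ℝ} {t : ℝ} (ht : t ≠ 0)
    (h : (1 - t) • (Pi.single i 1 : P → ℝ) + t • z
       = (1 - t) • (Pi.single i 1 : P → ℝ) + t • z') : z = z' := by
  have := add_left_cancel h
  exact smul_right_injective (P → ℝ) ht this

theorem rle_subset_rlt (htr : ∀ a b c, le a b → le b c → le a c)
    {j i : P} (hji : le j i) (hne : j ≠ i)
    (hanti : ∀ a b, le a b → le b a → a = b) :
    rle le j ⊆ rlt le i := by
  intro w hw
  refine ⟨hw.1, fun k hk => ⟨htr k j i (hw.2 k hk) hji, fun hki => ?_⟩⟩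
  subst hki
  exact hne (hanti j k hji (hw.2 k hk))


theorem chain_exists_top (htr : ∀ a b c, le a b → le b c → le a c)
    (s : Finset P) (hne : s.Nonempty)
    (hch : ∀ a ∈ s, ∀ b ∈ s, le a b ∨ le b a) :
    ∃ m ∈ s, ∀ a ∈ s, le a m := by
  classical
  induction s using Finset.induction_on with
  | empty => simp at hne
  | insert a t ha ih =>
    rcases t.eq_empty_or_nonempty with rfl | htne
    · refine ⟨a, by simp, ?_⟩
      intro b hb
      simp only [Finset.mem_insert, Finset.notMem_empty, or_false] at hb
      subst hb
      exact (hch b (by simp) b (by simp)).elim id id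
    · obtain ⟨m, hm, hmt⟩ := ih htne (fun x hx y hy =>
        hch x (Finset.mem_insert_of_mem hx) y (Finset.mem_insert_of_mem hy))
      rcases hch a (Finset.mem_insert_self a t) m (Finset.mem_insert_of_mem hm) with h | h
      · refine ⟨m, Finset.mem_insert_of_mem hm, ?_⟩
        intro b hb
        rcases Finset.mem_insert.mp hb with rfl | hb
        · exact h
        · exact hmt b hb
      · refine ⟨a, Finset.mem_insert_self a t, ?_⟩
        intro b hb
        rcases Finset.mem_insert.mp hb with rfl | hb
        · exact (hch b (Finset.mem_insert_self b t) b (Finset.mem_insert_self b t)).elim id id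
        · exact htr b m a (hmt b hb) h

theorem chainwt.exists_max (htr : ∀ a b c, le a b → le b c → le a c)
    {w : P → ℝ} (h : chainwt le w) :
    ∃ m, w m ≠ 0 ∧ ∀ k, w k ≠ 0 → le k m := by
  classical
  obtain ⟨k0, hk0⟩ := h.exists_ne_zero
  obtain ⟨m, hm, hmax⟩ := chain_exists_top htr (Finset.univ.filter (w · ≠ 0))
    ⟨k0, by simp [hk0]⟩
    (fun a hha b hhb => h.2.2 a b (by simpa using hha) (by simpa using hhb))
  exact ⟨m, by simpa using hm, fun k hk => hmax k (by simp [hk])⟩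

end Real

section Comp
variable {P Q : Type} [Fintype P] [Fintype Q] {leP : P → P → Prop} {leQ : Q → Q → Prop}
  (φ : P ≃ Q)

theorem chainwt_comp (hle : ∀ a b : P, leP a b ↔ leQ (φ a) (φ b)) {w : P → ℝ} (h : chainwt leP w) : chainwt leQ (w ∘ φ.symm) := by
  refine ⟨fun k => h.1 _, ?_, fun j k hj hk => ?_⟩
  · rw [show (∑ k, (w ∘ φ.symm) k) = ∑ j, w j from Equiv.sum_comp φ.symm w, h.2.1]
  · have := h.2.2 (φ.symm j) (φ.symm k) hj hk
    rcases this with h' | h'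
    · exact Or.inl (by simpa [Equiv.apply_symm_apply] using (hle (φ.symm j) (φ.symm k)).mp h')
    · exact Or.inr (by simpa [Equiv.apply_symm_apply] using (hle (φ.symm k) (φ.symm j)).mp h')

theorem rle_comp (hle : ∀ a b : P, leP a b ↔ leQ (φ a) (φ b)) {i : P} {w : P → ℝ} (h : w ∈ rle leP i) : (w ∘ φ.symm) ∈ rle leQ (φ i) := by
  refine ⟨chainwt_comp φ hle h.1, fun k hk => ?_⟩
  have := h.2 (φ.symm k) hk
  simpa [Equiv.apply_symm_apply] using (hle (φ.symm k) i).mp this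

end Comp



namespace RegCW
variable {X : Type*} [TopologicalSpace X] (C : RegCW X)

theorem relint_subset (i : C.ι) : C.relint i ⊆ C.cell i := by
  rintro x ⟨p, -, rfl⟩; exact p.2

theorem mem_relint_iff {i : C.ι} {x : X} (hx : x ∈ C.cell i) :
    x ∈ C.relint i ↔ ‖((C.hom i ⟨x, hx⟩ : (Metric.closedBall (0 : EuclideanSpace ℝ (Fin (C.dim i))) 1 : Set _)) : EuclideanSpace ℝ (Fin (C.dim i)))‖ < 1 := by
  constructor
  · rintro ⟨p, hp, hpx⟩
    obtain ⟨q, hq, hqp⟩ := hp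
    have hpe : p = ⟨x, hx⟩ := Subtype.ext hpx
    rw [← hpe, ← hqp, Homeomorph.apply_symm_apply]
    exact hq
  · intro h
    exact ⟨⟨x, hx⟩, ⟨C.hom i ⟨x, hx⟩, h, (C.hom i).symm_apply_apply _⟩, rfl⟩

theorem relint_nonempty (i : C.ι) : (C.relint i).Nonempty := by
  have h0 : (0 : EuclideanSpace ℝ (Fin (C.dim i))) ∈
      Metric.closedBall (0 : EuclideanSpace ℝ (Fin (C.dim i))) 1 :=
    Metric.mem_closedBall_self (by norm_num)
  refine ⟨((C.hom i).symm ⟨0, h0⟩ : (C.cell i : Set X)), ⟨(C.hom i).symm ⟨0, h0⟩, ⟨⟨0, h0⟩, ?_, rfl⟩, rfl⟩⟩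
  simp

theorem norm_le_one {i : C.ι} (p : (C.cell i : Set X)) :
    ‖((C.hom i p : _) : EuclideanSpace ℝ (Fin (C.dim i)))‖ ≤ 1 := by
  have := (C.hom i p).2
  rwa [Metric.mem_closedBall, dist_zero_right] at this

theorem mem_bd_iff {i : C.ι} {x : X} (hx : x ∈ C.cell i) :
    x ∈ C.cell i \ C.relint i ↔ ‖((C.hom i ⟨x, hx⟩ : _) : EuclideanSpace ℝ (Fin (C.dim i)))‖ = 1 := by
  rw [Set.mem_diff, C.mem_relint_iff hx]
  have h1 := C.norm_le_one ⟨x, hx⟩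
  constructor
  · rintro ⟨-, h⟩
    exact le_antisymm h1 (le_of_not_gt h)
  · intro h
    exact ⟨hx, by rw [h]; norm_num⟩

variable {C}
variable (hC : C.IsValid)
include hC

theorem relint_unique {i j : C.ι} {x : X} (hi : x ∈ C.relint i) (hj : x ∈ C.relint j) : i = j := by
  by_contra h
  exact Set.disjoint_left.mp (hC.1 i j h) hi hj

theorem cell_subset_iUnion_relint :
    ∀ n (i : C.ι), C.dim i ≤ n →
      C.cell i ⊆ ⋃ j, ⋃ (_ : C.cell j ⊆ C.cell i), C.relint j := by
  intro n
  induction n using Nat.strong_induction_on with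
  | _ n ih =>
    intro i hdim x hx
    obtain ⟨J, hJd, hJ⟩ := hC.2.2 i
    by_cases hxr : x ∈ C.relint i
    · exact Set.mem_iUnion.mpr ⟨i, Set.mem_iUnion.mpr ⟨subset_refl _, hxr⟩⟩
    · have hxb : x ∈ C.cell i \ C.relint i := ⟨hx, hxr⟩
      rw [hJ] at hxb
      obtain ⟨j, hjJ, hxj⟩ := Set.mem_iUnion₂.mp hxb
      have hji : C.cell j ⊆ C.cell i := by
        intro y hy
        have : y ∈ C.cell i \ C.relint i := hJ ▸ Set.mem_iUnion₂.mpr ⟨j, hjJ, hy⟩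
        exact this.1
      have hdj : C.dim j < n := lt_of_lt_of_le (hJd j hjJ) hdim
      have := ih (C.dim j) hdj j le_rfl hxj
      obtain ⟨k, hk⟩ := Set.mem_iUnion.mp this
      obtain ⟨hkj, hxk⟩ := Set.mem_iUnion.mp hk
      exact Set.mem_iUnion.mpr ⟨k, Set.mem_iUnion.mpr ⟨hkj.trans hji, hxk⟩⟩

theorem cell_subset_of_relint_mem {j i : C.ι} {x : X} (hj : x ∈ C.relint j)
    (hi : x ∈ C.cell i) : C.cell j ⊆ C.cell i := by
  have := cell_subset_iUnion_relint hC (C.dim i) i le_rfl hi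
  obtain ⟨k, hk⟩ := Set.mem_iUnion.mp this
  obtain ⟨hki, hxk⟩ := Set.mem_iUnion.mp hk
  rwa [relint_unique hC hj hxk]

theorem dim_lt_of_ssubset :
    ∀ n (i : C.ι), C.dim i ≤ n → ∀ j, C.cell j ⊆ C.cell i → j ≠ i → C.dim j < C.dim i := by
  intro n
  induction n using Nat.strong_induction_on with
  | _ n ih =>
    intro i hdim j hji hne
    obtain ⟨J, hJd, hJ⟩ := hC.2.2 i
    obtain ⟨x, hxr⟩ := C.relint_nonempty j
    have hxb : x ∈ C.cell i \ C.relint i := by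
      refine ⟨hji (C.relint_subset j hxr), fun hri => ?_⟩
      exact Set.disjoint_left.mp (hC.1 j i hne) hxr hri
    rw [hJ] at hxb
    obtain ⟨k, hkJ, hxk⟩ := Set.mem_iUnion₂.mp hxb
    have hjk : C.cell j ⊆ C.cell k := cell_subset_of_relint_mem hC hxr hxk
    rcases eq_or_ne j k with rfl | hjkne
    · exact hJd j hkJ
    · have hdk : C.dim k < n := lt_of_lt_of_le (hJd k hkJ) hdim
      exact lt_trans (ih (C.dim k) hdk k le_rfl j hjk hjkne) (hJd k hkJ)

theorem bd_eq_iUnion :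
    ∀ i : C.ι, C.cell i \ C.relint i =
      ⋃ j, ⋃ (_ : C.cell j ⊆ C.cell i ∧ j ≠ i), C.cell j := by
  intro i
  obtain ⟨J, hJd, hJ⟩ := hC.2.2 i
  apply Set.Subset.antisymm
  · rw [hJ]
    refine Set.iUnion₂_subset fun j hjJ => ?_
    have hji : C.cell j ⊆ C.cell i := by
      intro y hy
      exact (hJ ▸ Set.mem_iUnion₂.mpr ⟨j, hjJ, hy⟩ : y ∈ C.cell i \ C.relint i).1
    have hne : j ≠ i := fun h => absurd (h ▸ hJd j hjJ) (lt_irrefl _)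
    exact fun y hy => Set.mem_iUnion₂.mpr ⟨j, ⟨hji, hne⟩, hy⟩
  · refine Set.iUnion₂_subset fun j ⟨hji, hne⟩ x hx => ?_
    refine ⟨hji hx, fun hri => ?_⟩
    have hij : C.cell i ⊆ C.cell j := cell_subset_of_relint_mem hC hri hx
    exact hne (C.inj (Set.Subset.antisymm hji hij))

end RegCW

namespace RegCW

def lle {X : Type*} [TopologicalSpace X] (C : RegCW X) : C.ι → C.ι → Prop :=
  fun j i => C.cell j ⊆ C.cell i

section Cons
variable {X : Type*} [TopologicalSpace X] [T2Space X] {C : RegCW X}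

theorem lle_refl (i : C.ι) : C.lle i i := subset_refl _
theorem lle_trans : ∀ a b c, C.lle a b → C.lle b c → C.lle a c :=
  fun _ _ _ h1 h2 => h1.trans h2
theorem lle_antisymm : ∀ a b, C.lle a b → C.lle b a → a = b :=
  fun _ _ h1 h2 => C.inj (Set.Subset.antisymm h1 h2)

theorem cell_isCompact (i : C.ι) : IsCompact (C.cell i) := by
  have h1 : CompactSpace (Metric.closedBall (0 : EuclideanSpace ℝ (Fin (C.dim i))) 1) :=
    isCompact_iff_compactSpace.mp (isCompact_closedBall _ _)
  have h2 : CompactSpace (C.cell i) := (C.hom i).symm.compactSpace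
  exact isCompact_iff_compactSpace.mpr h2

theorem cell_isClosed (i : C.ι) : IsClosed (C.cell i) := (cell_isCompact i).isClosed

variable (hC : C.IsValid)
include hC

theorem iUnion_cell : ⋃ i, C.cell i = Set.univ := by
  apply Set.Subset.antisymm (Set.subset_univ _)
  rw [← hC.2.1]
  exact Set.iUnion_mono fun i => C.relint_subset i

theorem compactSpaceX : CompactSpace X := by
  rw [← isCompact_univ_iff, ← iUnion_cell hC]
  exact isCompact_iUnion fun i => cell_isCompact i

noncomputable def pt (x : X) : C.ι :=
  (Set.mem_iUnion.mp (by rw [hC.2.1]; exact Set.mem_univ x : x ∈ ⋃ i, C.relint i)).choose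

theorem pt_spec (x : X) : x ∈ C.relint (pt hC x) :=
  (Set.mem_iUnion.mp (by rw [hC.2.1]; exact Set.mem_univ x : x ∈ ⋃ i, C.relint i)).choose_spec

noncomputable def glue (g : ∀ i, ↥(C.cell i) → (C.ι → ℝ)) : X → C.ι → ℝ :=
  fun x => g (pt hC x) ⟨x, C.relint_subset _ (pt_spec hC x)⟩

/-- coherence of a family at index `i` -/
def Coh (g : ∀ i, ↥(C.cell i) → (C.ι → ℝ)) (i : C.ι) : Prop :=
  ∀ j (h : C.cell j ⊆ C.cell i) (x : X) (hx : x ∈ C.cell j), g i ⟨x, h hx⟩ = g j ⟨x, hx⟩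

theorem glue_eq {g : ∀ i, ↥(C.cell i) → (C.ι → ℝ)} {j : C.ι} (hcoh : Coh g j)
    {x : X} (hx : x ∈ C.cell j) : glue hC g x = g j ⟨x, hx⟩ := by
  have hm := pt_spec hC x
  have hsub : C.cell (pt hC x) ⊆ C.cell j := cell_subset_of_relint_mem hC hm hx
  exact (hcoh (pt hC x) hsub x (C.relint_subset _ hm)).symm

theorem glue_continuousOn {g : ∀ i, ↥(C.cell i) → (C.ι → ℝ)} {s : Set C.ι}
    (hcont : ∀ j ∈ s, Continuous (g j)) (hcoh : ∀ j ∈ s, Coh g j) :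
    ContinuousOn (glue hC g) (⋃ j ∈ s, C.cell j) := by
  rw [Set.biUnion_eq_iUnion]
  refine LocallyFinite.continuousOn_iUnion (locallyFinite_of_finite _)
    (fun j => cell_isClosed _) (fun j => ?_)
  rw [continuousOn_iff_continuous_restrict]
  have he : (C.cell j.1).restrict (glue hC g) = g j.1 :=
    funext fun p => glue_eq hC (hcoh j.1 j.2) p.2
  rw [show (C.cell j.1).domRestrict (glue hC g) = g j.1 from he]
  exact hcont j.1 j.2

end Cons
end RegCW

namespace RegCW
section Cone
variable {X : Type*} [TopologicalSpace X] [T2Space X] {C : RegCW X} [Fintype C.ι]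
  [DecidableEq C.ι]

noncomputable def nproj {n : ℕ} (v : EuclideanSpace ℝ (Fin n)) : EuclideanSpace ℝ (Fin n) := ‖v‖⁻¹ • v

theorem nproj_norm {n : ℕ} (v : EuclideanSpace ℝ (Fin n)) (hv : v ≠ 0) : ‖nproj v‖ = 1 := by
  rw [nproj, norm_smul, norm_inv, norm_norm]
  field_simp [norm_ne_zero_iff.mpr hv]

theorem nproj_mem {n : ℕ} (v : EuclideanSpace ℝ (Fin n)) :
    nproj v ∈ Metric.closedBall (0 : EuclideanSpace ℝ (Fin n)) 1 := by
  rcases eq_or_ne v 0 with rfl | hv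
  · simp [nproj]
  · simp [Metric.mem_closedBall, dist_zero_right, nproj_norm v hv]

variable (C) in
noncomputable def qmap (i : C.ι) : ↥(C.cell i) → ↥(C.cell i) := fun p =>
  (C.hom i).symm ⟨nproj ((C.hom i p : _) : EuclideanSpace ℝ (Fin (C.dim i))), nproj_mem _⟩

variable (C) in
noncomputable def coneMap (i : C.ι) (b : X → C.ι → ℝ) :
    ↥(C.cell i) → C.ι → ℝ := fun p =>
  (1 - ‖((C.hom i p : _) : EuclideanSpace ℝ (Fin (C.dim i)))‖) • (Pi.single i 1 : C.ι → ℝ)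
    + ‖((C.hom i p : _) : EuclideanSpace ℝ (Fin (C.dim i)))‖ • b ↑(qmap C i p)

theorem qmap_mem_bd {i : C.ι} {p : ↥(C.cell i)}
    (hp : ((C.hom i p : _) : EuclideanSpace ℝ (Fin (C.dim i))) ≠ 0) :
    ↑(qmap C i p) ∈ C.cell i \ C.relint i := by
  have h2 : (qmap C i p : X) ∈ C.cell i := (qmap C i p).2
  rw [C.mem_bd_iff h2]
  have h3 : (⟨↑(qmap C i p), h2⟩ : ↥(C.cell i)) = qmap C i p := Subtype.coe_eta _ _
  rw [h3, qmap, Homeomorph.apply_symm_apply]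
  exact nproj_norm _ hp

theorem qmap_eq_self {i : C.ι} {p : ↥(C.cell i)}
    (hp : ‖((C.hom i p : _) : EuclideanSpace ℝ (Fin (C.dim i)))‖ = 1) : qmap C i p = p := by
  rw [qmap]
  have : nproj ((C.hom i p : _) : EuclideanSpace ℝ (Fin (C.dim i)))
      = ((C.hom i p : _) : EuclideanSpace ℝ (Fin (C.dim i))) := by
    rw [nproj, hp, inv_one, one_smul]
  simp_rw [this]
  rw [Subtype.coe_eta]
  exact (C.hom i).symm_apply_apply p

theorem coneMap_bd_eq {i : C.ι} (b : X → C.ι → ℝ) {p : ↥(C.cell i)}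
    (hp : (p : X) ∈ C.cell i \ C.relint i) : coneMap C i b p = b ↑p := by
  have h1 : ‖((C.hom i p : _) : EuclideanSpace ℝ (Fin (C.dim i)))‖ = 1 := by
    rw [C.mem_bd_iff p.2, Subtype.coe_eta] at hp
    exact hp
  rw [coneMap, qmap_eq_self h1, h1]
  simp

theorem coneMap_center_eq {i : C.ι} (b : X → C.ι → ℝ) {p : ↥(C.cell i)}
    (hp : ((C.hom i p : _) : EuclideanSpace ℝ (Fin (C.dim i))) = 0) :
    coneMap C i b p = Pi.single i 1 := by
  rw [coneMap]
  simp [hp]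

end Cone
end RegCW

namespace RegCW
section Cone2
variable {X : Type*} [TopologicalSpace X] [T2Space X] {C : RegCW X} [Fintype C.ι]
  [DecidableEq C.ι] {i : C.ι} {b : X → C.ι → ℝ}

theorem f_continuous (C : RegCW X) (i : C.ι) :
    Continuous (fun p : ↥(C.cell i) => ((C.hom i p : _) : EuclideanSpace ℝ (Fin (C.dim i)))) :=
  continuous_subtype_val.comp (C.hom i).continuous

theorem coneMap_continuous (hb_cont : ContinuousOn b (C.cell i \ C.relint i))
    (hb_maps : ∀ x ∈ C.cell i \ C.relint i, b x ∈ rlt C.lle i) :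
    Continuous (coneMap C i b) := by
  have hf : Continuous (fun p : ↥(C.cell i) => ((C.hom i p : _) : EuclideanSpace ℝ (Fin (C.dim i)))) :=
    f_continuous C i
  set f := fun p : ↥(C.cell i) => ((C.hom i p : _) : EuclideanSpace ℝ (Fin (C.dim i))) with hfdef
  have hnrm : Continuous (fun p => ‖f p‖) := hf.norm
  have hr : Continuous (fun p : ↥(C.cell i) => ‖f p‖ • b ↑(qmap C i p)) := by
    rw [continuous_iff_continuousAt]
    intro p₀
    rcases eq_or_ne (f p₀) 0 with h0 | h0
    · -- squeeze at the cone point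
      apply continuousAt_pi.mpr
      intro k
      have hval : ‖f p₀‖ * b (↑(qmap C i p₀)) k = 0 := by
        rw [h0]; simp
      have htend : Filter.Tendsto (fun p : ↥(C.cell i) => ‖f p‖) (nhds p₀) (nhds 0) := by
        have h2 := hnrm.tendsto p₀
        simp only [h0, norm_zero] at h2
        exact h2
      have key : Filter.Tendsto (fun p : ↥(C.cell i) => ‖f p‖ * b (↑(qmap C i p)) k)
          (nhds p₀) (nhds 0) := by
        apply squeeze_zero_norm _ htend
        intro p
        rcases eq_or_ne (f p) 0 with h | h
        · rw [h]; simp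
        · have hb1 := hb_maps _ (qmap_mem_bd h)
          have h01 : 0 ≤ b (↑(qmap C i p)) k := hb1.1.1 k
          have h11 : b (↑(qmap C i p)) k ≤ 1 := hb1.1.le_one k
          rw [Real.norm_eq_abs, abs_mul, abs_norm]
          calc ‖f p‖ * |b (↑(qmap C i p)) k| ≤ ‖f p‖ * 1 := by
                apply mul_le_mul_of_nonneg_left _ (norm_nonneg _)
                rw [abs_of_nonneg h01]; exact h11
          _ = ‖f p‖ := mul_one _
      show Filter.Tendsto _ _ _
      simp only [Pi.smul_apply, smul_eq_mul, hval]
      exact key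
    · -- away from the cone point
      have hne : ‖f p₀‖ ≠ 0 := norm_ne_zero_iff.mpr h0
      have hnp : ContinuousAt (fun p => nproj (f p)) p₀ := by
        apply ContinuousAt.smul (ContinuousAt.inv₀ hnrm.continuousAt hne) hf.continuousAt
      have hmk : ContinuousAt (fun p : ↥(C.cell i) =>
          (⟨nproj (f p), nproj_mem _⟩ :
            ↥(Metric.closedBall (0 : EuclideanSpace ℝ (Fin (C.dim i))) 1))) p₀ := by
        apply (Topology.IsInducing.subtypeVal.continuousAt_iff).mpr
        exact hnp
      have hq_cont : ContinuousAt (fun p => (↑(qmap C i p) : X)) p₀ :=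
        continuous_subtype_val.continuousAt.comp
          ((C.hom i).symm.continuous.continuousAt.comp hmk)
      have hev : ∀ᶠ p in nhds p₀, (↑(qmap C i p) : X) ∈ C.cell i \ C.relint i := by
        have hevf : ∀ᶠ p in nhds p₀, f p ≠ 0 :=
          hf.continuousAt.preimage_mem_nhds (isOpen_compl_singleton.mem_nhds h0)
        exact hevf.mono fun p hp => qmap_mem_bd hp
      have hcomb : Filter.Tendsto (fun p => (↑(qmap C i p) : X)) (nhds p₀)
          (nhdsWithin (↑(qmap C i p₀)) (C.cell i \ C.relint i)) :=
        tendsto_nhdsWithin_iff.mpr ⟨hq_cont, hev⟩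
      have hbq : ContinuousAt (fun p => b ↑(qmap C i p)) p₀ :=
        (hb_cont _ (qmap_mem_bd h0)).tendsto.comp hcomb
      exact hnrm.continuousAt.smul hbq
  exact ((continuous_const.sub hnrm).smul continuous_const).add hr

theorem coneMap_coord (hb_maps : ∀ x ∈ C.cell i \ C.relint i, b x ∈ rlt C.lle i)
    (p : ↥(C.cell i)) :
    coneMap C i b p i = 1 - ‖((C.hom i p : _) : EuclideanSpace ℝ (Fin (C.dim i)))‖ := by
  set v := ((C.hom i p : _) : EuclideanSpace ℝ (Fin (C.dim i))) with hv
  have hform : coneMap C i b p i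
      = (1 - ‖v‖) * (Pi.single i 1 : C.ι → ℝ) i + ‖v‖ * b (↑(qmap C i p)) i := rfl
  rcases eq_or_ne v 0 with h | h
  · rw [hform, Pi.single_eq_same, h]; simp
  · rw [hform, Pi.single_eq_same, rlt_coord_zero (hb_maps _ (qmap_mem_bd h))]
    ring

theorem coneMap_mem_rle (hb_maps : ∀ x ∈ C.cell i \ C.relint i, b x ∈ rlt C.lle i)
    (p : ↥(C.cell i)) : coneMap C i b p ∈ rle C.lle i := by
  rcases eq_or_ne ((C.hom i p : _) : EuclideanSpace ℝ (Fin (C.dim i))) 0 with h | h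
  · rw [coneMap_center_eq b h]
    exact delta_mem_rle lle_refl i
  · exact cone_mem_rle lle_refl (hb_maps _ (qmap_mem_bd h)) (norm_nonneg _) (C.norm_le_one p)

theorem coneMap_injective (hb_maps : ∀ x ∈ C.cell i \ C.relint i, b x ∈ rlt C.lle i)
    (hb_inj : Set.InjOn b (C.cell i \ C.relint i)) :
    Function.Injective (coneMap C i b) := by
  intro p p' h
  have hco := congrArg (fun w => w i) h
  simp only [coneMap_coord hb_maps] at hco
  set v := ((C.hom i p : _) : EuclideanSpace ℝ (Fin (C.dim i))) with hv
  set v' := ((C.hom i p' : _) : EuclideanSpace ℝ (Fin (C.dim i))) with hv'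
  have ht : ‖v‖ = ‖v'‖ := by linarith
  have hinjval : ∀ {a a' : ↥(C.cell i)},
      ((C.hom i a : _) : EuclideanSpace ℝ (Fin (C.dim i)))
        = ((C.hom i a' : _) : EuclideanSpace ℝ (Fin (C.dim i))) → a = a' := by
    intro a a' hh
    exact (C.hom i).injective (Subtype.coe_injective hh)
  rcases eq_or_ne v 0 with h0 | h0
  · have h0' : v' = 0 := by
      rw [← norm_eq_zero, ← ht, h0, norm_zero]
    exact hinjval (h0.trans h0'.symm)
  · have h0' : v' ≠ 0 := by
      rw [← norm_ne_zero_iff, ← ht, norm_ne_zero_iff]; exact h0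
    have hform : coneMap C i b p
        = (1 - ‖v‖) • (Pi.single i 1 : C.ι → ℝ) + ‖v‖ • b (↑(qmap C i p)) := rfl
    have hform' : coneMap C i b p'
        = (1 - ‖v'‖) • (Pi.single i 1 : C.ι → ℝ) + ‖v'‖ • b (↑(qmap C i p')) := rfl
    rw [hform, hform', ← ht] at h
    have hz := cone_cancel (norm_ne_zero_iff.mpr h0) h
    have hq : qmap C i p = qmap C i p' :=
      Subtype.coe_injective (hb_inj (qmap_mem_bd h0) (qmap_mem_bd h0') hz)
    have hnp : nproj v = nproj v' := by
      have := congrArg (fun q => ((C.hom i q : _) : EuclideanSpace ℝ (Fin (C.dim i)))) hq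
      simpa [qmap, Homeomorph.apply_symm_apply] using this
    have : v = v' := by
      have h1 : ‖v‖ • nproj v = v := smul_inv_smul₀ (norm_ne_zero_iff.mpr h0) v
      have h2 : ‖v'‖ • nproj v' = v' := smul_inv_smul₀ (norm_ne_zero_iff.mpr h0') v'
      rw [← h1, ← h2, hnp, ht]
    exact hinjval this

theorem coneMap_surj (hb_maps : ∀ x ∈ C.cell i \ C.relint i, b x ∈ rlt C.lle i)
    (hb_surj : ∀ w ∈ rlt C.lle i, ∃ x ∈ C.cell i \ C.relint i, b x = w) :
    rle C.lle i ⊆ Set.range (coneMap C i b) := by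
  intro w hw
  rcases eq_or_ne (w i) 1 with h1 | h1
  · refine ⟨(C.hom i).symm ⟨0, Metric.mem_closedBall_self (by norm_num)⟩, ?_⟩
    have h0 : ((C.hom i ((C.hom i).symm ⟨0, Metric.mem_closedBall_self (by norm_num)⟩) : _) :
        EuclideanSpace ℝ (Fin (C.dim i))) = 0 := by
      rw [Homeomorph.apply_symm_apply]
    rw [coneMap_center_eq b h0, rle_coord_one hw h1]
  · obtain ⟨hz, weq⟩ := rle_decomp hw h1
    set z := (1 - w i)⁻¹ • (w - w i • (Pi.single i 1 : C.ι → ℝ)) with hzdef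
    set t := 1 - w i with htdef
    have hwi0 : 0 ≤ w i := hw.1.1 i
    have hwi1 : w i ≤ 1 := hw.1.le_one i
    have ht0 : 0 < t := by
      rcases lt_or_eq_of_le hwi1 with h | h
      · simp [htdef]; linarith
      · exact absurd h h1
    have ht1 : t ≤ 1 := by simp [htdef]; linarith
    obtain ⟨y, hybd, hby⟩ := hb_surj z hz
    have hy : y ∈ C.cell i := hybd.1
    set u := ((C.hom i ⟨y, hy⟩ : _) : EuclideanSpace ℝ (Fin (C.dim i))) with hu
    have hu1 : ‖u‖ = 1 := (C.mem_bd_iff hy).mp hybd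
    have htu : ‖t • u‖ = t := by
      rw [norm_smul, hu1, Real.norm_eq_abs, abs_of_pos ht0, mul_one]
    have htumem : t • u ∈ Metric.closedBall (0 : EuclideanSpace ℝ (Fin (C.dim i))) 1 := by
      rw [Metric.mem_closedBall, dist_zero_right, htu]; exact ht1
    refine ⟨(C.hom i).symm ⟨t • u, htumem⟩, ?_⟩
    have hfp : ((C.hom i ((C.hom i).symm ⟨t • u, htumem⟩) : _) :
        EuclideanSpace ℝ (Fin (C.dim i))) = t • u := by
      rw [Homeomorph.apply_symm_apply]
    have hnproj : nproj (t • u) = u := by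
      rw [nproj, htu, inv_smul_smul₀ (ne_of_gt ht0)]
    have hqval : (↑(qmap C i ((C.hom i).symm ⟨t • u, htumem⟩)) : X) = y := by
      have harg : (⟨nproj ((C.hom i ((C.hom i).symm ⟨t • u, htumem⟩) : _) :
            EuclideanSpace ℝ (Fin (C.dim i))), nproj_mem _⟩ :
          ↥(Metric.closedBall (0 : EuclideanSpace ℝ (Fin (C.dim i))) 1)) = C.hom i ⟨y, hy⟩ := by
        apply Subtype.coe_injective
        show nproj ((C.hom i ((C.hom i).symm ⟨t • u, htumem⟩) : _) :
            EuclideanSpace ℝ (Fin (C.dim i))) = _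
        rw [hfp, hnproj, hu]
      show (↑((C.hom i).symm ⟨nproj ((C.hom i ((C.hom i).symm ⟨t • u, htumem⟩) : _) :
          EuclideanSpace ℝ (Fin (C.dim i))), nproj_mem _⟩) : X) = y
      rw [harg, Homeomorph.symm_apply_apply]
    have hcone : coneMap C i b ((C.hom i).symm ⟨t • u, htumem⟩)
        = (1 - t) • (Pi.single i 1 : C.ι → ℝ) + t • b y := by
      show (1 - ‖((C.hom i ((C.hom i).symm ⟨t • u, htumem⟩) : _) :
          EuclideanSpace ℝ (Fin (C.dim i)))‖) • (Pi.single i 1 : C.ι → ℝ)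
          + ‖((C.hom i ((C.hom i).symm ⟨t • u, htumem⟩) : _) :
          EuclideanSpace ℝ (Fin (C.dim i)))‖ • b ↑(qmap C i ((C.hom i).symm ⟨t • u, htumem⟩)) = _
      rw [hqval]
      simp_rw [hfp, htu]
    rw [hcone, hby, weq]
    have : 1 - t = w i := by simp [htdef]
    rw [this]
end Cone2
end RegCW

namespace RegCW
section Good
variable {X : Type*} [TopologicalSpace X] [T2Space X] {C : RegCW X} [Fintype C.ι]
  [DecidableEq C.ι]

/-- the goodness predicate for a partial family of cell parametrizations -/
def Good (g : ∀ i, ↥(C.cell i) → (C.ι → ℝ)) (i : C.ι) : Prop :=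
  Continuous (g i) ∧ Function.Injective (g i) ∧ Set.range (g i) = rle C.lle i ∧
  Coh g i ∧ ∀ (x : X) (hx : x ∈ C.cell i), x ∈ C.relint i → g i ⟨x, hx⟩ i ≠ 0

variable (hC : C.IsValid)
include hC

theorem glue_injOn {g : ∀ i, ↥(C.cell i) → (C.ι → ℝ)} {A : Set X}
    (hgood : ∀ x ∈ A, Good g (pt hC x)) : Set.InjOn (glue hC g) A := by
  intro x hx x' hx' he
  have hgm := hgood x hx
  have hgm' := hgood x' hx'
  have h1 : glue hC g x = g (pt hC x) ⟨x, C.relint_subset _ (pt_spec hC x)⟩ :=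
    glue_eq hC hgm.2.2.2.1 _
  have h1' : glue hC g x' = g (pt hC x') ⟨x', C.relint_subset _ (pt_spec hC x')⟩ :=
    glue_eq hC hgm'.2.2.2.1 _
  have hw : glue hC g x ∈ rle C.lle (pt hC x) := by
    rw [h1, ← hgm.2.2.1]; exact ⟨_, rfl⟩
  have hw' : glue hC g x' ∈ rle C.lle (pt hC x') := by
    rw [h1', ← hgm'.2.2.1]; exact ⟨_, rfl⟩
  have hm0 : glue hC g x (pt hC x) ≠ 0 := by
    rw [h1]; exact hgm.2.2.2.2 x _ (pt_spec hC x)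
  have hm0' : glue hC g x' (pt hC x') ≠ 0 := by
    rw [h1']; exact hgm'.2.2.2.2 x' _ (pt_spec hC x')
  have hle1 : C.lle (pt hC x') (pt hC x) := hw.2 _ (by rw [he]; exact hm0')
  have hle2 : C.lle (pt hC x) (pt hC x') := hw'.2 _ (by rw [← he]; exact hm0)
  have hmm : pt hC x' = pt hC x := lle_antisymm _ _ hle1 hle2
  have hx'm : x' ∈ C.cell (pt hC x) := hmm ▸ C.relint_subset _ (pt_spec hC x')
  have h2 : glue hC g x' = g (pt hC x) ⟨x', hx'm⟩ := glue_eq hC hgm.2.2.2.1 hx'm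
  have h3 := hgm.2.1 (h1.symm.trans (he.trans h2))
  exact congrArg Subtype.val h3

theorem exists_good : ∀ n : ℕ, ∃ g : ∀ i, ↥(C.cell i) → (C.ι → ℝ),
    ∀ i, C.dim i < n → Good g i := by
  intro n
  induction n with
  | zero => exact ⟨fun _ _ => 0, fun i h => absurd h (Nat.not_lt_zero _)⟩
  | succ n ih =>
    obtain ⟨g, hg⟩ := ih
    set b := glue hC g with hbdef
    set g' : ∀ i, ↥(C.cell i) → C.ι → ℝ :=
      (fun i => if h : C.dim i < n then g i else coneMap C i b) with hg'def
    have hg'lt : ∀ j, C.dim j < n → g' j = g j := fun j hj => by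
      simp only [hg'def]; rw [dif_pos hj]
    have hg'ge : ∀ j, ¬ C.dim j < n → g' j = coneMap C j b := fun j hj => by
      simp only [hg'def]; rw [dif_neg hj]
    refine ⟨g', ?_⟩
    intro i hdim
    by_cases hlt : C.dim i < n
    · -- old cell, unchanged
      obtain ⟨hcont, hinj, hran, hcoh, hnz⟩ := hg i hlt
      refine ⟨?_, ?_, ?_, ?_, ?_⟩
      · rw [hg'lt i hlt]; exact hcont
      · rw [hg'lt i hlt]; exact hinj
      · rw [hg'lt i hlt]; exact hran
      · intro j hsub x hx
        rcases eq_or_ne j i with rfl | hne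
        · rfl
        · have hdj : C.dim j < C.dim i := dim_lt_of_ssubset hC (C.dim i) i le_rfl j hsub hne
          rw [hg'lt i hlt, hg'lt j (hdj.trans hlt)]
          exact hcoh j hsub x hx
      · rw [hg'lt i hlt]; exact hnz
    · -- new cell of dimension n
      have hdi : C.dim i ≤ n := Nat.lt_succ_iff.mp hdim
      have hgoodlt : ∀ j, C.cell j ⊆ C.cell i → j ≠ i → Good g j := by
        intro j hsub hne
        exact hg j (lt_of_lt_of_le (dim_lt_of_ssubset hC (C.dim i) i le_rfl j hsub hne) hdi)
      have hb_cont : ContinuousOn b (C.cell i \ C.relint i) := by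
        rw [bd_eq_iUnion hC i]
        exact glue_continuousOn hC (s := {j | C.cell j ⊆ C.cell i ∧ j ≠ i})
          (fun j hj => (hgoodlt j hj.1 hj.2).1) (fun j hj => (hgoodlt j hj.1 hj.2).2.2.2.1)
      have hb_maps : ∀ x ∈ C.cell i \ C.relint i, b x ∈ rlt C.lle i := by
        intro x hx
        rw [bd_eq_iUnion hC i] at hx
        obtain ⟨j, hj, hxj⟩ := Set.mem_iUnion₂.mp hx
        have hgj := hgoodlt j hj.1 hj.2
        have hbx : b x = g j ⟨x, hxj⟩ := glue_eq hC hgj.2.2.2.1 hxj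
        rw [hbx]
        apply rle_subset_rlt lle_trans hj.1 hj.2 lle_antisymm
        rw [← hgj.2.2.1]
        exact ⟨_, rfl⟩
      have hb_inj : Set.InjOn b (C.cell i \ C.relint i) := by
        apply glue_injOn hC
        intro x hx
        rw [bd_eq_iUnion hC i] at hx
        obtain ⟨j, hj, hxj⟩ := Set.mem_iUnion₂.mp hx
        have hsub : C.cell (pt hC x) ⊆ C.cell j :=
          cell_subset_of_relint_mem hC (pt_spec hC x) hxj
        rcases eq_or_ne (pt hC x) j with heq | hne
        · rw [heq]; exact hgoodlt _ hj.1 hj.2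
        · have h5 : C.dim (pt hC x) < C.dim j := dim_lt_of_ssubset hC (C.dim j) j le_rfl _ hsub hne
          have h6 : C.dim j < C.dim i := dim_lt_of_ssubset hC (C.dim i) i le_rfl j hj.1 hj.2
          exact hg _ (lt_of_lt_of_le (h5.trans h6) hdi)
      have hb_surj : ∀ w ∈ rlt C.lle i, ∃ x ∈ C.cell i \ C.relint i, b x = w := by
        intro w hw
        obtain ⟨m, hm0, hmax⟩ := chainwt.exists_max lle_trans hw.1
        have hmi := hw.2 m hm0
        have hgm := hgoodlt m hmi.1 hmi.2
        have hwm : w ∈ rle C.lle m := ⟨hw.1, fun k hk => hmax k hk⟩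
        rw [← hgm.2.2.1] at hwm
        obtain ⟨p, hp⟩ := hwm
        refine ⟨↑p, ?_, ?_⟩
        · rw [bd_eq_iUnion hC i]
          exact Set.mem_iUnion₂.mpr ⟨m, ⟨hmi.1, hmi.2⟩, p.2⟩
        · have hbp : b ↑p = g m ⟨↑p, p.2⟩ := glue_eq hC hgm.2.2.2.1 p.2
          rw [hbp, Subtype.coe_eta]
          exact hp
      refine ⟨?_, ?_, ?_, ?_, ?_⟩
      · rw [hg'ge i hlt]; exact coneMap_continuous hb_cont hb_maps
      · rw [hg'ge i hlt]; exact coneMap_injective hb_maps hb_inj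
      · rw [hg'ge i hlt]
        exact Set.Subset.antisymm (Set.range_subset_iff.mpr (coneMap_mem_rle hb_maps))
          (coneMap_surj hb_maps hb_surj)
      · intro j hsub x hx
        rcases eq_or_ne j i with rfl | hne
        · rfl
        · have hbd : x ∈ C.cell i \ C.relint i := by
            rw [bd_eq_iUnion hC i]; exact Set.mem_iUnion₂.mpr ⟨j, ⟨hsub, hne⟩, hx⟩
          have hgj := hgoodlt j hsub hne
          have hdj : C.dim j < n :=
            lt_of_lt_of_le (dim_lt_of_ssubset hC (C.dim i) i le_rfl j hsub hne) hdi
          rw [hg'ge i hlt, hg'lt j hdj, coneMap_bd_eq b hbd]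
          exact glue_eq hC hgj.2.2.2.1 hx

      · intro x hx hrel
        rw [hg'ge i hlt, coneMap_coord hb_maps]
        have hnm := (C.mem_relint_iff hx).mp hrel
        intro hcon
        rw [sub_eq_zero] at hcon
        rw [← hcon] at hnm
        exact lt_irrefl _ hnm
end Good
end RegCW

namespace RegCW
section Final
variable {X : Type*} [TopologicalSpace X] [T2Space X] {C : RegCW X} [Fintype C.ι]
  [DecidableEq C.ι]
variable (hC : C.IsValid)
include hC

theorem exists_H :
    ∃ H : X → (C.ι → ℝ), Continuous H ∧ Function.Injective H ∧
      Set.range H = rall C.lle ∧ (∀ (i : C.ι) (x : X), x ∈ C.cell i ↔ H x ∈ rle C.lle i) := by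
  obtain ⟨N, hN⟩ : ∃ N : ℕ, ∀ i, C.dim i < N := by
    obtain ⟨N, hN⟩ := (Set.finite_range C.dim).bddAbove
    exact ⟨N + 1, fun i => Nat.lt_succ_of_le (hN (Set.mem_range_self i))⟩
  obtain ⟨g, hg⟩ := exists_good hC N
  have good : ∀ i, Good g i := fun i => hg i (hN i)
  refine ⟨glue hC g, ?_, ?_, ?_, ?_⟩
  · rw [← continuousOn_univ, ← iUnion_cell hC, ← Set.biUnion_univ]
    exact glue_continuousOn hC (fun j _ => (good j).1) (fun j _ => (good j).2.2.2.1)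
  · rw [← Set.injOn_univ]
    exact glue_injOn hC (fun x _ => good _)
  · apply Set.Subset.antisymm
    · rintro w ⟨x, rfl⟩
      apply Set.mem_iUnion.mpr ⟨pt hC x, ?_⟩
      rw [glue_eq hC (good (pt hC x)).2.2.2.1 (C.relint_subset _ (pt_spec hC x)),
        ← (good (pt hC x)).2.2.1]
      exact ⟨_, rfl⟩
    · intro w hw
      obtain ⟨i, hwi⟩ := Set.mem_iUnion.mp hw
      rw [← (good i).2.2.1] at hwi
      obtain ⟨p, hp⟩ := hwi
      refine ⟨↑p, ?_⟩
      rw [glue_eq hC (good i).2.2.2.1 p.2, Subtype.coe_eta]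
      exact hp
  · intro i x
    constructor
    · intro hx
      rw [glue_eq hC (good i).2.2.2.1 hx, ← (good i).2.2.1]
      exact ⟨_, rfl⟩
    · intro hw
      have h1 : glue hC g x = g (pt hC x) ⟨x, C.relint_subset _ (pt_spec hC x)⟩ :=
        glue_eq hC (good (pt hC x)).2.2.2.1 _
      have hm0 : glue hC g x (pt hC x) ≠ 0 := by
        rw [h1]; exact (good (pt hC x)).2.2.2.2 x _ (pt_spec hC x)
      have hle : C.lle (pt hC x) i := hw.2 _ hm0
      exact hle (C.relint_subset _ (pt_spec hC x))
end Final
end RegCW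

/-- Two finite regular CW complexes (on Hausdorff spaces) whose face
posets are isomorphic have homeomorphic underlying spaces; moreover the homeomorphism
can be chosen to send each cell to the corresponding cell under the poset
isomorphism. -/
theorem regCW_homeomorph_of_posetIso {X Y : Type*} [TopologicalSpace X]
    [TopologicalSpace Y] [T2Space X] [T2Space Y]
    (C : RegCW X) (D : RegCW Y) (hC : C.IsValid) (hD : D.IsValid)
    (φ : C.ι ≃ D.ι)
    (hφ : ∀ i j, C.cell i ⊆ C.cell j ↔ D.cell (φ i) ⊆ D.cell (φ j)) :
    ∃ h : X ≃ₜ Y, ∀ i, h '' C.cell i = D.cell (φ i) := by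
  classical
  letI : Fintype C.ι := Fintype.ofFinite _
  letI : Fintype D.ι := Fintype.ofFinite _
  haveI : CompactSpace X := RegCW.compactSpaceX hC
  haveI : CompactSpace Y := RegCW.compactSpaceX hD
  obtain ⟨HC, hHCc, hHCi, hHCr, hHCm⟩ := RegCW.exists_H hC
  obtain ⟨HD, hHDc, hHDi, hHDr, hHDm⟩ := RegCW.exists_H hD
  have hle : ∀ a b : C.ι, C.lle a b ↔ D.lle (φ a) (φ b) := fun a b => hφ a b
  have hle' : ∀ a b : D.ι, D.lle a b ↔ C.lle (φ.symm a) (φ.symm b) := by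
    intro a b
    have h := hφ (φ.symm a) (φ.symm b)
    rw [Equiv.apply_symm_apply, Equiv.apply_symm_apply] at h
    exact h.symm
  have hrle : ∀ (i : C.ι) (w : C.ι → ℝ),
      w ∈ rle C.lle i ↔ (w ∘ φ.symm) ∈ rle D.lle (φ i) := by
    intro i w
    constructor
    · exact rle_comp φ hle
    · intro h
      have h2 := rle_comp φ.symm hle' h
      have h3 : ((w ∘ ⇑φ.symm) ∘ ⇑φ.symm.symm) = w := by
        funext k; simp
      rw [h3, Equiv.symm_apply_apply] at h2
      exact h2
  have hrall : ∀ w : C.ι → ℝ, w ∈ rall C.lle ↔ (w ∘ φ.symm) ∈ rall D.lle := by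
    intro w
    constructor
    · intro h
      obtain ⟨i, hi⟩ := Set.mem_iUnion.mp h
      exact Set.mem_iUnion.mpr ⟨φ i, (hrle i w).mp hi⟩
    · intro h
      obtain ⟨k, hk⟩ := Set.mem_iUnion.mp h
      refine Set.mem_iUnion.mpr ⟨φ.symm k, ?_⟩
      apply (hrle (φ.symm k) w).mpr
      rwa [Equiv.apply_symm_apply]
  -- homeomorphism X ≃ₜ realization of the face poset of C
  have hXmem : ∀ x : X, HC x ∈ rall C.lle := fun x => hHCr ▸ Set.mem_range_self x
  have hXbij : Function.Bijective (fun x : X => (⟨HC x, hXmem x⟩ : ↥(rall C.lle))) := by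
    constructor
    · intro a b h; exact hHCi (congrArg Subtype.val h)
    · intro w
      obtain ⟨x, hx⟩ := show (w : C.ι → ℝ) ∈ Set.range HC by rw [hHCr]; exact w.2
      exact ⟨x, Subtype.ext hx⟩
  have heXc : Continuous (fun x : X => (⟨HC x, hXmem x⟩ : ↥(rall C.lle))) :=
    Continuous.subtype_mk hHCc _
  let hoX : X ≃ₜ ↥(rall C.lle) :=
    Continuous.homeoOfEquivCompactToT2 (f := Equiv.ofBijective _ hXbij) heXc
  have hYmem : ∀ y : Y, HD y ∈ rall D.lle := fun y => hHDr ▸ Set.mem_range_self y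
  have hYbij : Function.Bijective (fun y : Y => (⟨HD y, hYmem y⟩ : ↥(rall D.lle))) := by
    constructor
    · intro a b h; exact hHDi (congrArg Subtype.val h)
    · intro w
      obtain ⟨y, hy⟩ := show (w : D.ι → ℝ) ∈ Set.range HD by rw [hHDr]; exact w.2
      exact ⟨y, Subtype.ext hy⟩
  have heYc : Continuous (fun y : Y => (⟨HD y, hYmem y⟩ : ↥(rall D.lle))) :=
    Continuous.subtype_mk hHDc _
  let hoY : Y ≃ₜ ↥(rall D.lle) :=
    Continuous.homeoOfEquivCompactToT2 (f := Equiv.ofBijective _ hYbij) heYc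
  -- middle homeomorphism between the two realizations
  let midE : ↥(rall C.lle) ≃ ↥(rall D.lle) :=
    { toFun := fun w => ⟨↑w ∘ φ.symm, (hrall ↑w).mp w.2⟩
      invFun := fun w => ⟨↑w ∘ φ, by
        have heq : ((↑w ∘ ⇑φ) ∘ ⇑φ.symm) = (↑w : D.ι → ℝ) := by
          funext k; simp
        exact (hrall _).mpr (by rw [heq]; exact w.2)⟩
      left_inv := fun w => Subtype.ext (funext fun k => by simp)
      right_inv := fun w => Subtype.ext (funext fun k => by simp) }
  have hmid0 : Continuous (fun w : ↥(rall C.lle) => ((↑w ∘ ⇑φ.symm) : D.ι → ℝ)) := by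
    apply continuous_pi
    intro k
    exact (continuous_apply (φ.symm k)).comp continuous_subtype_val
  have hmid1 : Continuous (fun w : ↥(rall C.lle) =>
      ((⟨↑w ∘ ⇑φ.symm, (hrall ↑w).mp w.2⟩ : ↥(rall D.lle)))) :=
    Continuous.subtype_mk hmid0 _
  have hmid2 : Continuous (fun w : ↥(rall D.lle) => ((↑w ∘ ⇑φ) : C.ι → ℝ)) := by
    apply continuous_pi
    intro k
    exact (continuous_apply (φ k)).comp continuous_subtype_val
  let mid : ↥(rall C.lle) ≃ₜ ↥(rall D.lle) :=
    { toEquiv := midE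
      continuous_toFun := hmid1
      continuous_invFun := Continuous.subtype_mk hmid2 _ }
  let h : X ≃ₜ Y := hoX.trans (mid.trans hoY.symm)
  have hpoint : ∀ (i : C.ι) (x : X), x ∈ C.cell i ↔ h x ∈ D.cell (φ i) := by
    intro i x
    have hy : HD (h x) = HC x ∘ φ.symm := by
      have h1 : hoY (h x) = mid (hoX x) := by
        show hoY (hoY.symm (mid (hoX x))) = _
        rw [Homeomorph.apply_symm_apply]
      have h2 : (hoY (h x) : D.ι → ℝ) = HD (h x) := rfl
      rw [← h2, h1]
      rfl
    rw [hHCm i x, hHDm (φ i) (h x), hy]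
    exact hrle i (HC x)
  refine ⟨h, fun i => ?_⟩
  ext y
  constructor
  · rintro ⟨x, hx, rfl⟩
    exact (hpoint i x).mp hx
  · intro hy
    refine ⟨h.symm y, (hpoint i _).mpr ?_, h.apply_symm_apply y⟩
    rwa [Homeomorph.apply_symm_apply]
end

section
/- Let Σ be a complete unimodular fan in R^n. For each cone σ ∈ Σ with primitive ray generators v_1,...,v_k, let C_σ be the parallelepiped (cube) {∑ t_i v_i : t_i ∈ [0,1]}, i.e. the convex hull of the points ∑_{i∈I} v_i over I ⊆ {1,...,k}. Then the union pStar(R^n) = ⋃_{σ∈Σ} C_σ is a compact neighbourhood of the origin that is star-shaped with respect to 0, and the collection {C_σ : σ ∈ Σ} together with their faces forms a polyhedral complex covering it. -/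
namespace PSAux

open Finset Function

variable {n : ℕ}

abbrev Vn (n : ℕ) := Fin n → ℝ

def Box (B : Module.Basis (Fin n) ℝ (Vn n)) (l h : Fin n → ℝ) : Set (Vn n) :=
  {x | ∀ j, l j ≤ B.repr x j ∧ B.repr x j ≤ h j}

def Sub (L H l h : Fin n → ℝ) : Prop :=
  ∀ j, (l j = L j ∧ h j = H j) ∨ (l j = L j ∧ h j = L j) ∨ (l j = H j ∧ h j = H j)

lemma Sub.refl (L H : Fin n → ℝ) : Sub L H L H := fun _ => Or.inl ⟨rfl, rfl⟩

lemma Sub.trans {L H l h l' h' : Fin n → ℝ} (h1 : Sub L H l h) (h2 : Sub l h l' h') :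
    Sub L H l' h' := by
  intro j
  rcases h1 j with ⟨e1, e2⟩ | ⟨e1, e2⟩ | ⟨e1, e2⟩ <;>
    rcases h2 j with ⟨f1, f2⟩ | ⟨f1, f2⟩ | ⟨f1, f2⟩ <;> simp_all <;> tauto

lemma sub_bounds {L H l h : Fin n → ℝ} (hLH : ∀ j, L j ≤ H j) (hs : Sub L H l h) :
    ∀ j, L j ≤ l j ∧ l j ≤ h j ∧ h j ≤ H j := by
  intro j
  rcases hs j with ⟨e1, e2⟩ | ⟨e1, e2⟩ | ⟨e1, e2⟩ <;> rw [e1, e2]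
  · exact ⟨le_rfl, hLH j, le_rfl⟩
  · exact ⟨le_rfl, le_rfl, hLH j⟩
  · exact ⟨hLH j, le_rfl, le_rfl⟩

lemma sub_supp {L H l h : Fin n → ℝ} (hs : Sub L H l h) {j : Fin n}
    (h1 : L j = 0) (h2 : H j = 0) : l j = 0 ∧ h j = 0 := by
  rcases hs j with ⟨e1, e2⟩ | ⟨e1, e2⟩ | ⟨e1, e2⟩ <;> rw [e1, e2] <;> simp_all

lemma box_subset {B : Module.Basis (Fin n) ℝ (Vn n)} {L H l h : Fin n → ℝ}
    (hLH : ∀ j, L j ≤ H j) (hs : Sub L H l h) : Box B l h ⊆ Box B L H := by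
  intro x hx j
  obtain ⟨a, _, c⟩ := sub_bounds hLH hs j
  exact ⟨a.trans (hx j).1, (hx j).2.trans c⟩

lemma mem_box_sum {B : Module.Basis (Fin n) ℝ (Vn n)} {l h : Fin n → ℝ} (c : Fin n → ℝ)
    (hc : ∀ j, l j ≤ c j ∧ c j ≤ h j) : (∑ j, c j • B j) ∈ Box B l h := by
  intro j
  rw [B.repr_sum_self]
  exact hc j

lemma isPolyhedron_box (B : Module.Basis (Fin n) ℝ (Vn n)) {l h : Fin n → ℝ}
    (hlh : ∀ j, l j ≤ h j) : IsPolyhedron (Box B l h) := by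
  classical
  refine ⟨⟨∑ j, l j • B j, mem_box_sum l (fun j => ⟨le_rfl, hlh j⟩)⟩, ?_⟩
  refine ⟨(Finset.univ.image fun j => (B.coord j, h j)) ∪
    (Finset.univ.image fun j => (-B.coord j, -(l j))), ?_⟩
  ext x
  simp only [Box, Set.mem_setOf_eq, Finset.mem_union, Finset.mem_image, Finset.mem_univ,
    true_and]
  constructor
  · rintro hx c (⟨j, rfl⟩ | ⟨j, rfl⟩)
    · simpa [Module.Basis.coord_apply] using (hx j).2
    · simpa [Module.Basis.coord_apply] using neg_le_neg (hx j).1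
  · intro hx j
    constructor
    · have := hx (-B.coord j, -(l j)) (Or.inr ⟨j, rfl⟩)
      simp only [LinearMap.neg_apply, Module.Basis.coord_apply] at this
      linarith
    · have := hx (B.coord j, h j) (Or.inl ⟨j, rfl⟩)
      simpa [Module.Basis.coord_apply] using this

lemma apply_eq_sum (B : Module.Basis (Fin n) ℝ (Vn n)) (ℓ : Vn n →ₗ[ℝ] ℝ) (x : Vn n) :
    ℓ x = ∑ j, B.repr x j * ℓ (B j) := by
  conv_lhs => rw [← B.sum_repr x]
  rw [map_sum]
  simp [smul_eq_mul]

lemma face_of_sub (B : Module.Basis (Fin n) ℝ (Vn n)) {L H l h : Fin n → ℝ}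
    (hLH : ∀ j, L j ≤ H j) (hs : Sub L H l h) :
    IsFaceOf (Box B l h) (Box B L H) := by
  classical
  right
  set a : Fin n → ℝ := fun j => if h j < H j then -1 else if L j < l j then 1 else 0 with ha
  set cc : Fin n → ℝ := fun j => if h j < H j then -(L j) else if L j < l j then H j else 0
    with hcc
  refine ⟨∑ j, a j • B.coord j, ∑ j, cc j, ?_, ?_⟩
  · intro x hx
    simp only [LinearMap.sum_apply, LinearMap.smul_apply, Module.Basis.coord_apply, smul_eq_mul]
    apply Finset.sum_le_sum
    intro j _
    by_cases h1 : h j < H j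
    · simp only [ha, hcc, if_pos h1]
      have := (hx j).1
      linarith
    · by_cases h2 : L j < l j
      · simp only [ha, hcc, if_neg h1, if_pos h2]
        have := (hx j).2
        linarith
      · simp [ha, hcc, if_neg h1, if_neg h2]
  · ext x
    simp only [Set.mem_setOf_eq, LinearMap.sum_apply, LinearMap.smul_apply, Module.Basis.coord_apply,
      smul_eq_mul]
    constructor
    · intro hx
      have hxb : x ∈ Box B L H := box_subset hLH hs hx
      refine ⟨hxb, ?_⟩
      apply Finset.sum_congr rfl
      intro j _
      by_cases h1 : h j < H j
      · simp only [ha, hcc, if_pos h1]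
        have hr : B.repr x j = L j := by
          rcases hs j with ⟨e1, e2⟩ | ⟨e1, e2⟩ | ⟨e1, e2⟩
          · rw [e2] at h1; exact absurd h1 (lt_irrefl _)
          · have := (hx j).1; have := (hx j).2; rw [e1] at *; rw [e2] at *; linarith
          · rw [e2] at h1; exact absurd h1 (lt_irrefl _)
        rw [hr]; ring
      · by_cases h2 : L j < l j
        · simp only [ha, hcc, if_neg h1, if_pos h2]
          have hr : B.repr x j = H j := by
            rcases hs j with ⟨e1, e2⟩ | ⟨e1, e2⟩ | ⟨e1, e2⟩
            · rw [e1] at h2; exact absurd h2 (lt_irrefl _)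
            · rw [e1] at h2; exact absurd h2 (lt_irrefl _)
            · have := (hx j).1; have := (hx j).2; rw [e1] at *; rw [e2] at *; linarith
          rw [hr]; ring
        · simp [ha, hcc, if_neg h1, if_neg h2]
    · rintro ⟨hxb, hsum⟩ j
      -- from sum equality, per-coordinate tightness
      have hterm : ∀ j, a j * B.repr x j ≤ cc j := by
        intro j
        by_cases h1 : h j < H j
        · simp only [ha, hcc, if_pos h1]; have := (hxb j).1; linarith
        · by_cases h2 : L j < l j
          · simp only [ha, hcc, if_neg h1, if_pos h2]; have := (hxb j).2; linarith
          · simp [ha, hcc, if_neg h1, if_neg h2]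
      have htight : ∀ j, a j * B.repr x j = cc j := by
        intro j
        have := (Finset.sum_eq_sum_iff_of_le (fun j _ => hterm j)).1 hsum
        exact this j (Finset.mem_univ j)
      rcases hs j with ⟨e1, e2⟩ | ⟨e1, e2⟩ | ⟨e1, e2⟩
      · rw [e1, e2]; exact hxb j
      · rw [e1, e2]
        by_cases h1 : h j < H j
        · have := htight j
          simp only [ha, hcc, if_pos h1] at this
          have hr : B.repr x j = L j := by linarith
          rw [hr]; exact ⟨le_rfl, le_rfl⟩
        · -- h j = L j and ¬ h j < H j ⇒ H j ≤ L j ⇒ L j = H j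
          rw [e2] at h1
          have hLHj : L j = H j := le_antisymm (hLH j) (not_lt.1 h1)
          have := hxb j
          rw [← hLHj] at this
          exact this
      · rw [e1, e2]
        by_cases h1 : h j < H j
        · rw [e2] at h1; exact absurd h1 (lt_irrefl _)
        · by_cases h2 : L j < l j
          · have := htight j
            simp only [ha, hcc, if_neg h1, if_pos h2] at this
            have hr : B.repr x j = H j := by linarith
            rw [hr]; exact ⟨le_rfl, le_rfl⟩
          · rw [e1] at h2
            have hLHj : L j = H j := le_antisymm (hLH j) (not_lt.1 h2)
            have := hxb j
            rw [hLHj] at this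
            exact this

lemma sub_of_face (B : Module.Basis (Fin n) ℝ (Vn n)) {L H : Fin n → ℝ} (hLH : ∀ j, L j ≤ H j)
    {F : Set (Vn n)} (hF : IsFaceOf F (Box B L H)) (hne : F.Nonempty) :
    ∃ l h, Sub L H l h ∧ F = Box B l h := by
  classical
  rcases hF with rfl | ⟨ℓ, c, hle, rfl⟩
  · exact ⟨L, H, Sub.refl L H, rfl⟩
  set a : Fin n → ℝ := fun j => ℓ (B j) with ha
  set M : Fin n → ℝ := fun j => if 0 ≤ a j then a j * H j else a j * L j with hM
  have key : ∀ x ∈ Box B L H, ∀ j, B.repr x j * a j ≤ M j := by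
    intro x hx j
    by_cases hj : 0 ≤ a j
    · simp only [hM, if_pos hj]
      rw [mul_comm]
      exact mul_le_mul_of_nonneg_left (hx j).2 hj
    · simp only [hM, if_neg hj]
      rw [mul_comm]
      exact mul_le_mul_of_nonpos_left (hx j).1 (le_of_not_ge hj)
  have hstar : (∑ j, (if 0 ≤ a j then H j else L j) • B j) ∈ Box B L H := by
    apply mem_box_sum
    intro j
    by_cases hj : 0 ≤ a j <;> simp [hj, hLH j]
  have hcM : c = ∑ j, M j := by
    obtain ⟨x0, hx0box, hx0c⟩ := hne
    have h1 : c ≤ ∑ j, M j := by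
      rw [← hx0c, apply_eq_sum B ℓ x0]
      exact Finset.sum_le_sum fun j _ => key x0 hx0box j
    have h2 : ∑ j, M j ≤ c := by
      have hh := hle _ hstar
      rw [apply_eq_sum B ℓ] at hh
      have hr : ∀ j, B.repr (∑ j', (if 0 ≤ a j' then H j' else L j') • B j') j
          = if 0 ≤ a j then H j else L j := by
        intro j; rw [B.repr_sum_self]
      calc ∑ j, M j = ∑ j, B.repr (∑ j', (if 0 ≤ a j' then H j' else L j') • B j') j * a j := by
            apply Finset.sum_congr rfl
            intro j _
            rw [hr j, hM]
            by_cases hj : 0 ≤ a j <;> simp [hj] <;> ring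
        _ ≤ c := hh
    linarith
  refine ⟨fun j => if 0 < a j then H j else L j, fun j => if a j < 0 then L j else H j, ?_, ?_⟩
  · intro j
    rcases lt_trichotomy (a j) 0 with hj | hj | hj
    · right; left
      simp [if_neg (asymm hj), if_pos hj, if_neg (not_lt.2 hj.le)]
    · left
      simp [hj]
    · right; right
      simp [if_pos hj, if_neg (asymm hj), if_neg (not_lt.2 hj.le)]
  · ext x
    constructor
    · rintro ⟨hxbox, hxc⟩
      have htight : ∀ j, B.repr x j * a j = M j := by
        have hsum : ∑ j, B.repr x j * a j = ∑ j, M j := by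
          rw [← apply_eq_sum B ℓ x, hxc, hcM]
        intro j
        exact (Finset.sum_eq_sum_iff_of_le (fun j _ => key x hxbox j)).1 hsum j
          (Finset.mem_univ j)
      intro j
      rcases lt_trichotomy (a j) 0 with hj | hj | hj
      · have hMj : M j = a j * L j := by rw [hM]; simp [not_le.2 hj]
        have : B.repr x j = L j := by
          have ht := htight j
          rw [hMj] at ht
          have := mul_right_cancel₀ (ne_of_lt hj) (by linarith [ht] : B.repr x j * a j = L j * a j)
          exact this
        rw [this]
        constructor
        · simp [if_neg (not_lt.2 hj.le)]
        · simp [if_pos hj]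
      · simpa [hj] using hxbox j
      · have hMj : M j = a j * H j := by rw [hM]; simp [hj.le]
        have : B.repr x j = H j := by
          have ht := htight j
          rw [hMj] at ht
          exact mul_right_cancel₀ (ne_of_gt hj) (by linarith [ht] : B.repr x j * a j = H j * a j)
        rw [this]
        constructor
        · simp [if_pos hj]
        · simp [if_neg (not_lt.2 hj.le)]
    · intro hx
      have hsub : Sub L H (fun j => if 0 < a j then H j else L j)
          (fun j => if a j < 0 then L j else H j) := by
        intro j
        rcases lt_trichotomy (a j) 0 with hj | hj | hj
        · right; left
          simp [if_neg (asymm hj), if_pos hj, if_neg (not_lt.2 hj.le)]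
        · left
          simp [hj]
        · right; right
          simp [if_pos hj, if_neg (asymm hj), if_neg (not_lt.2 hj.le)]
      have hxbox : x ∈ Box B L H := box_subset hLH hsub hx
      refine ⟨hxbox, ?_⟩
      rw [apply_eq_sum B ℓ x, hcM]
      apply Finset.sum_congr rfl
      intro j _
      rcases lt_trichotomy (a j) 0 with hj | hj | hj
      · have h1 := (hx j).1
        have h2 := (hx j).2
        simp only [if_neg (not_lt.2 hj.le), if_pos hj] at h1 h2
        have hr : B.repr x j = L j := le_antisymm h2 h1
        rw [hr, hM]
        simp [not_le.2 hj, mul_comm]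
        exact Or.inl rfl
      · simp only [hM]
        rw [hj]
        simp
        exact Or.inr hj
      · have h1 := (hx j).1
        have h2 := (hx j).2
        simp only [if_pos hj, if_neg (asymm hj)] at h1 h2
        have hr : B.repr x j = H j := le_antisymm h2 h1
        rw [hr, hM]
        simp [hj.le, mul_comm]
        exact Or.inl rfl

lemma box_inter (B : Module.Basis (Fin n) ℝ (Vn n)) (l1 h1 l2 h2 : Fin n → ℝ) :
    Box B l1 h1 ∩ Box B l2 h2
      = Box B (fun j => max (l1 j) (l2 j)) (fun j => min (h1 j) (h2 j)) := by
  ext x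
  simp only [Set.mem_inter_iff, Box, Set.mem_setOf_eq]
  constructor
  · rintro ⟨hx1, hx2⟩ j
    exact ⟨max_le (hx1 j).1 (hx2 j).1, le_min (hx1 j).2 (hx2 j).2⟩
  · intro hx
    constructor <;> intro j
    · exact ⟨(le_max_left _ _).trans (hx j).1, (hx j).2.trans (min_le_left _ _)⟩
    · exact ⟨(le_max_right _ _).trans (hx j).1, (hx j).2.trans (min_le_right _ _)⟩

lemma real_case {L H p1 q1 p2 q2 : ℝ} (hLH : L ≤ H)
    (h1 : (p1 = L ∧ q1 = H) ∨ (p1 = L ∧ q1 = L) ∨ (p1 = H ∧ q1 = H))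
    (h2 : (p2 = L ∧ q2 = H) ∨ (p2 = L ∧ q2 = L) ∨ (p2 = H ∧ q2 = H))
    (hc : max p1 p2 ≤ min q1 q2) :
    (max p1 p2 = p1 ∧ min q1 q2 = q1) ∨ (max p1 p2 = p1 ∧ min q1 q2 = p1) ∨
      (max p1 p2 = q1 ∧ min q1 q2 = q1) := by
  rcases h1 with ⟨e1, e2⟩ | ⟨e1, e2⟩ | ⟨e1, e2⟩ <;>
    rcases h2 with ⟨f1, f2⟩ | ⟨f1, f2⟩ | ⟨f1, f2⟩ <;>
      rw [e1, e2, f1, f2] at hc ⊢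
  · exact Or.inl ⟨max_self _, min_self _⟩
  · exact Or.inr (Or.inl ⟨max_self _, min_eq_right hLH⟩)
  · exact Or.inr (Or.inr ⟨max_eq_right hLH, min_self _⟩)
  · exact Or.inl ⟨max_self _, min_eq_left hLH⟩
  · exact Or.inl ⟨max_self _, min_self _⟩
  · have hE : L = H := le_antisymm hLH ((le_max_right L H).trans (hc.trans (min_le_left L H)))
    rw [hE]
    exact Or.inl ⟨max_self _, min_self _⟩
  · exact Or.inl ⟨max_eq_left hLH, min_self _⟩
  · have hE : L = H := le_antisymm hLH ((le_max_left H L).trans (hc.trans (min_le_right H L)))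
    rw [hE]
    exact Or.inl ⟨max_self _, min_self _⟩
  · exact Or.inl ⟨max_self _, min_self _⟩

lemma sub_inter {L H l1 h1 l2 h2 : Fin n → ℝ} (hLH : ∀ j, L j ≤ H j)
    (hs1 : Sub L H l1 h1) (hs2 : Sub L H l2 h2)
    (hc : ∀ j, max (l1 j) (l2 j) ≤ min (h1 j) (h2 j)) :
    Sub l1 h1 (fun j => max (l1 j) (l2 j)) (fun j => min (h1 j) (h2 j)) ∧
      Sub l2 h2 (fun j => max (l1 j) (l2 j)) (fun j => min (h1 j) (h2 j)) := by
  constructor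
  · intro j
    exact real_case (hLH j) (hs1 j) (hs2 j) (hc j)
  · intro j
    have := real_case (hLH j) (hs2 j) (hs1 j) (by rw [max_comm, min_comm]; exact hc j)
    rw [max_comm (l2 j) (l1 j), min_comm (h2 j) (h1 j)] at this
    exact this

lemma box_nonempty_compat {B : Module.Basis (Fin n) ℝ (Vn n)} {l1 h1 l2 h2 : Fin n → ℝ}
    (hne : (Box B l1 h1 ∩ Box B l2 h2).Nonempty) :
    ∀ j, max (l1 j) (l2 j) ≤ min (h1 j) (h2 j) := by
  obtain ⟨x, hx1, hx2⟩ := hne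
  intro j
  exact (max_le (hx1 j).1 (hx2 j).1).trans (le_min (hx1 j).2 (hx2 j).2)

lemma repr_sum_apply (B : Module.Basis (Fin n) ℝ (Vn n)) {m : ℕ} (f : Fin m → Fin n)
    (t : Fin m → ℝ) (j : Fin n) :
    B.repr (∑ i, t i • B (f i)) j = ∑ i, if f i = j then t i else 0 := by
  classical
  rw [map_sum]
  rw [Finsupp.finset_sum_apply]
  apply Finset.sum_congr rfl
  intro i _
  rw [map_smul, Finsupp.smul_apply, B.repr_self, Finsupp.single_apply, smul_eq_mul]
  by_cases h : f i = j <;> simp [h]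

lemma mem_box_iff_sum (B : Module.Basis (Fin n) ℝ (Vn n)) {m : ℕ} {f : Fin m → Fin n}
    (hf : Function.Injective f) {l h : Fin n → ℝ}
    (hsupp : ∀ j, (∀ i, f i ≠ j) → l j = 0 ∧ h j = 0) (x : Vn n) :
    x ∈ Box B l h ↔
      ∃ t : Fin m → ℝ, (∀ i, l (f i) ≤ t i ∧ t i ≤ h (f i)) ∧ x = ∑ i, t i • B (f i) := by
  classical
  constructor
  · intro hx
    refine ⟨fun i => B.repr x (f i), fun i => hx (f i), ?_⟩
    have hzero : ∀ j, (∀ i, f i ≠ j) → B.repr x j = 0 := by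
      intro j hj
      obtain ⟨hl, hh⟩ := hsupp j hj
      have := hx j
      rw [hl, hh] at this
      exact le_antisymm this.2 this.1
    conv_lhs => rw [← B.sum_repr x]
    rw [← Finset.sum_subset (Finset.subset_univ (Finset.univ.image f))]
    · rw [Finset.sum_image (fun i _ i' _ hh => hf hh)]
    · intro j _ hj
      have hni : ∀ i, f i ≠ j := by
        intro i hij
        exact hj (Finset.mem_image.2 ⟨i, Finset.mem_univ i, hij⟩)
      rw [hzero j hni, zero_smul]
  · rintro ⟨t, ht, rfl⟩
    intro j
    rw [repr_sum_apply]
    by_cases hj : ∃ i, f i = j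
    · obtain ⟨i0, rfl⟩ := hj
      rw [Finset.sum_eq_single i0]
      · simpa using ht i0
      · intro i _ hne
        rw [if_neg (fun hh => hne (hf hh))]
      · intro hna
        exact absurd (Finset.mem_univ i0) hna
    · push_neg at hj
      obtain ⟨hl, hh⟩ := hsupp j hj
      rw [hl, hh]
      rw [Finset.sum_eq_zero]
      · exact ⟨le_rfl, le_rfl⟩
      · intro i _
        rw [if_neg (hj i)]

noncomputable def Tt {m : ℕ} (src tgt : Fin m → Fin n) (c : Fin n → ℝ) : Fin n → ℝ :=
  fun j => if hj : ∃ i, tgt i = j then c (src hj.choose) else 0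

lemma Tt_apply {m : ℕ} {src tgt : Fin m → Fin n} (htgt : Function.Injective tgt)
    (c : Fin n → ℝ) (i : Fin m) : Tt src tgt c (tgt i) = c (src i) := by
  have hj : ∃ i', tgt i' = tgt i := ⟨i, rfl⟩
  rw [Tt, dif_pos hj]
  congr 1
  congr 1
  exact htgt hj.choose_spec

lemma Tt_off {m : ℕ} {src tgt : Fin m → Fin n} {j : Fin n} (hj : ∀ i, tgt i ≠ j)
    (c : Fin n → ℝ) : Tt src tgt c j = 0 := by
  rw [Tt, dif_neg (fun ⟨i, hi⟩ => hj i hi)]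

lemma box_transfer (B B' : Module.Basis (Fin n) ℝ (Vn n)) {m : ℕ} {f f' : Fin m → Fin n}
    (hf : Function.Injective f) (hf' : Function.Injective f')
    (hw : ∀ i, B (f i) = B' (f' i)) {l h : Fin n → ℝ}
    (hsupp : ∀ j, (∀ i, f i ≠ j) → l j = 0 ∧ h j = 0) :
    Box B l h = Box B' (Tt f f' l) (Tt f f' h) := by
  have hsupp' : ∀ j, (∀ i, f' i ≠ j) → Tt f f' l j = 0 ∧ Tt f f' h j = 0 := by
    intro j hj
    exact ⟨Tt_off hj l, Tt_off hj h⟩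
  ext x
  rw [mem_box_iff_sum B hf hsupp x, mem_box_iff_sum B' hf' hsupp' x]
  constructor
  · rintro ⟨t, ht, rfl⟩
    refine ⟨t, ?_, ?_⟩
    · intro i
      rw [Tt_apply hf' l i, Tt_apply hf' h i]
      exact ht i
    · apply Finset.sum_congr rfl
      intro i _
      rw [hw i]
  · rintro ⟨t, ht, rfl⟩
    refine ⟨t, ?_, ?_⟩
    · intro i
      have := ht i
      rwa [Tt_apply hf' l i, Tt_apply hf' h i] at this
    · apply Finset.sum_congr rfl
      intro i _
      rw [hw i]

lemma Tt_comp {m : ℕ} {f f' : Fin m → Fin n} (hf : Function.Injective f)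
    (hf' : Function.Injective f') (c : Fin n → ℝ)
    (hsupp : ∀ j, (∀ i, f i ≠ j) → c j = 0) :
    Tt f' f (Tt f f' c) = c := by
  funext j
  by_cases hj : ∃ i, f i = j
  · obtain ⟨i, rfl⟩ := hj
    rw [Tt_apply hf (Tt f f' c) i, Tt_apply hf' c i]
  · push_neg at hj
    rw [Tt_off hj, hsupp j hj]

lemma Tt_sub {m : ℕ} {f f' : Fin m → Fin n} (hf' : Function.Injective f')
    {l1 h1 l2 h2 : Fin n → ℝ} (hs : Sub l1 h1 l2 h2) :
    Sub (Tt f f' l1) (Tt f f' h1) (Tt f f' l2) (Tt f f' h2) := by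
  intro j
  by_cases hj : ∃ i, f' i = j
  · obtain ⟨i, rfl⟩ := hj
    rw [Tt_apply hf', Tt_apply hf', Tt_apply hf', Tt_apply hf']
    exact hs (f i)
  · push_neg at hj
    rw [Tt_off hj, Tt_off hj, Tt_off hj, Tt_off hj]
    exact Or.inl ⟨rfl, rfl⟩

lemma exists_real_basis (b : Module.Basis (Fin n) ℤ (Fin n → ℤ)) :
    ∃ B : Module.Basis (Fin n) ℝ (Vn n),
      (∀ j, B j = fun j' => ((b j j' : ℤ) : ℝ)) ∧
      (∀ (u : Fin n → ℤ) (j : Fin n),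
        B.repr (fun j' => ((u j' : ℤ) : ℝ)) j = ((b.repr u j : ℤ) : ℝ)) := by
  classical
  set Mz : Matrix (Fin n) (Fin n) ℤ := Matrix.of (fun i j => b i j) with hMz
  have hdetz : IsUnit Mz.det := by
    have hm : Mz = ((Pi.basisFun ℤ (Fin n)).toMatrix b).transpose := by
      apply Matrix.ext
      intro i j
      simp [hMz, Matrix.transpose_apply, Module.Basis.toMatrix_apply]
    rw [hm, Matrix.det_transpose]
    have : Invertible ((Pi.basisFun ℤ (Fin n)).toMatrix b) :=
      (Pi.basisFun ℤ (Fin n)).invertibleToMatrix b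
    exact (Matrix.isUnit_iff_isUnit_det _).1 (isUnit_of_invertible _)
  set Mr : Matrix (Fin n) (Fin n) ℝ := Mz.map (Int.cast : ℤ → ℝ) with hMr
  have hdetr : IsUnit Mr.transpose.det := by
    rw [Matrix.det_transpose]
    have hdc : Mr.det = ((Int.castRingHom ℝ) : ℤ →+* ℝ) Mz.det :=
      (RingHom.map_det (Int.castRingHom ℝ) Mz).symm
    rw [hdc]
    rcases Int.isUnit_iff.1 hdetz with hd | hd <;> rw [hd] <;> simp
  have hinv : Invertible Mr.transpose := Matrix.invertibleOfIsUnitDet _ hdetr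
  set B : Module.Basis (Fin n) ℝ (Vn n) :=
    (Pi.basisFun ℝ (Fin n)).map (Matrix.toLinearEquiv' Mr.transpose hinv) with hB
  have happly : ∀ j, B j = fun j' => ((b j j' : ℤ) : ℝ) := by
    intro j
    funext j'
    rw [hB]
    simp only [Module.Basis.map_apply, Pi.basisFun_apply]
    have : (Matrix.toLinearEquiv' Mr.transpose hinv) (Pi.single j 1)
        = Mr.transpose.mulVec (Pi.single j 1) := rfl
    rw [this]
    rw [Matrix.mulVec_single]
    simp [hMr, hMz]
  refine ⟨B, happly, ?_⟩
  intro u j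
  have hu : (fun j' => ((u j' : ℤ) : ℝ)) = ∑ i, ((b.repr u i : ℤ) : ℝ) • B i := by
    have := b.sum_repr u
    funext j'
    have happ : (∑ i, b.repr u i • b i) j' = u j' := by rw [this]
    rw [Finset.sum_apply] at happ
    have : ((u j' : ℤ) : ℝ) = ∑ i, ((b.repr u i : ℤ) : ℝ) * ((b i j' : ℤ) : ℝ) := by
      rw [← happ]
      push_cast
      apply Finset.sum_congr rfl
      intro i _
      simp [smul_eq_mul]
    rw [this, Finset.sum_apply]
    apply Finset.sum_congr rfl
    intro i _
    rw [happly i]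
    simp
  rw [hu, B.repr_sum_self]

lemma matching {kr ks : ℕ} (wr : Fin kr → Vn n) (ws : Fin ks → Vn n)
    (pr : Fin kr → (Vn n →ₗ[ℝ] ℝ)) (ps : Fin ks → (Vn n →ₗ[ℝ] ℝ))
    (hdr : ∀ m m', pr m (wr m') = if m' = m then 1 else 0)
    (hds : ∀ i i', ps i (ws i') = if i' = i then 1 else 0)
    (hintr : ∀ m i, ∃ z : ℤ, pr m (ws i) = z)
    (hints : ∀ i m, ∃ z : ℤ, ps i (wr m) = z)
    (Cr Cs : Set (Vn n))
    (hCr : Cr = {x | ∃ t : Fin kr → ℝ, (∀ m, 0 ≤ t m) ∧ x = ∑ m, t m • wr m})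
    (hCs : Cs = {x | ∃ t : Fin ks → ℝ, (∀ i, 0 ≤ t i) ∧ x = ∑ i, t i • ws i})
    (l0 : Vn n →ₗ[ℝ] ℝ) (hl0 : ∀ i, l0 (ws i) ≤ 0)
    (hsub : Cr = {x | x ∈ Cs ∧ l0 x = 0}) :
    ∃ μ : Fin kr → Fin ks, Function.Injective μ ∧ ∀ m, wr m = ws (μ m) := by
  classical
  have hdelta_sum_r : ∀ (m : Fin kr), ∑ m', (if m' = m then (1:ℝ) else 0) • wr m' = wr m := by
    intro m
    rw [Finset.sum_eq_single m]
    · simp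
    · intro i _ hne
      simp [hne]
    · intro h
      exact absurd (Finset.mem_univ m) h
  have hdelta_sum_s : ∀ (i : Fin ks), ∑ i', (if i' = i then (1:ℝ) else 0) • ws i' = ws i := by
    intro i
    rw [Finset.sum_eq_single i]
    · simp
    · intro i' _ hne
      simp [hne]
    · intro h
      exact absurd (Finset.mem_univ i) h
  have hmemr : ∀ m, wr m ∈ Cr := by
    intro m
    rw [hCr]
    exact ⟨fun m' => if m' = m then 1 else 0, fun m' => by positivity, (hdelta_sum_r m).symm⟩
  -- σ-representations of each wr m
  have hrep : ∀ m, ∃ s : Fin ks → ℝ, (∀ i, 0 ≤ s i) ∧ wr m = ∑ i, s i • ws i ∧ l0 (wr m) = 0 := by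
    intro m
    have := hmemr m
    rw [hsub] at this
    obtain ⟨hmem, hzero⟩ := this
    rw [hCs] at hmem
    obtain ⟨s, hs, hsum⟩ := hmem
    exact ⟨s, hs, hsum, hzero⟩
  choose S hS0 hSsum hSzero using hrep
  -- evaluation of linear functional on representations
  have heval : ∀ (ℓ : Vn n →ₗ[ℝ] ℝ) (m : Fin kr), ℓ (wr m) = ∑ i, S m i * ℓ (ws i) := by
    intro ℓ m
    rw [hSsum m, map_sum]
    simp [smul_eq_mul]
  have hps_eval : ∀ i m, ps i (wr m) = S m i := by
    intro i m
    rw [heval (ps i) m, Finset.sum_eq_single i]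
    · rw [hds]; simp
    · intro i' _ hne
      rw [hds]
      simp [hne]
    · intro h
      exact absurd (Finset.mem_univ i) h
  -- kill coefficients where l0 < 0
  have hkill : ∀ m i, l0 (ws i) < 0 → S m i = 0 := by
    intro m i hneg
    have hz : ∑ i, S m i * l0 (ws i) = 0 := by
      rw [← heval l0 m, hSzero m]
    have hterm : ∀ i' ∈ Finset.univ, S m i' * l0 (ws i') ≤ 0 :=
      fun i' _ => mul_nonpos_of_nonneg_of_nonpos (hS0 m i') (hl0 i')
    have := (Finset.sum_eq_zero_iff_of_nonpos hterm).1 hz i (Finset.mem_univ i)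
    rcases mul_eq_zero.1 this with h | h
    · exact h
    · exact absurd h (ne_of_lt hneg)
  have hmain : ∀ m, ∃ i, wr m = ws i := by
    intro m
    have hone : (1:ℝ) = ∑ i, S m i * pr m (ws i) := by
      rw [← heval (pr m) m, hdr]
      simp
    have hex : ∃ i0, S m i0 * pr m (ws i0) ≠ 0 := by
      by_contra hno
      push_neg at hno
      rw [Finset.sum_eq_zero (fun i _ => hno i)] at hone
      exact one_ne_zero hone
    obtain ⟨i0, hi0⟩ := hex
    have hSne : S m i0 ≠ 0 := fun h => hi0 (by rw [h, zero_mul])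
    have hSpos : 0 < S m i0 := lt_of_le_of_ne (hS0 m i0) (Ne.symm hSne)
    have hprpos : pr m (ws i0) ≠ 0 := fun h => hi0 (by rw [h, mul_zero])
    have hl0i0 : l0 (ws i0) = 0 := by
      by_contra hne
      have hlt : l0 (ws i0) < 0 := lt_of_le_of_ne (hl0 i0) hne
      exact absurd (hkill m i0 hlt) (ne_of_gt hSpos)
    -- ws i0 ∈ Cr
    have hwsmem : ws i0 ∈ Cr := by
      rw [hsub]
      constructor
      · rw [hCs]
        exact ⟨fun i' => if i' = i0 then 1 else 0, fun i' => by positivity,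
          (hdelta_sum_s i0).symm⟩
      · exact hl0i0
    rw [hCr] at hwsmem
    obtain ⟨u, hu0, husum⟩ := hwsmem
    have hueval : ∀ m', pr m' (ws i0) = u m' := by
      intro m'
      rw [husum, map_sum, Finset.sum_eq_single m']
      · rw [map_smul, smul_eq_mul, hdr]; simp
      · intro m'' _ hne
        rw [map_smul, smul_eq_mul, hdr]
        simp [hne]
      · intro h
        exact absurd (Finset.mem_univ m') h
    have humne : u m ≠ 0 := hueval m ▸ hprpos
    have hum_pos : 0 < u m := lt_of_le_of_ne (hu0 m) (Ne.symm humne)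
    -- for i ≠ i0, S m i = 0
    have hSoff : ∀ i, i ≠ i0 → S m i = 0 := by
      intro i hne
      have h0 : ps i (ws i0) = 0 := by
        rw [hds]
        exact if_neg (fun hh => hne hh.symm)
      have hz : ∑ m', u m' * S m' i = 0 := by
        have hthis : ps i (ws i0) = ∑ m', u m' * ps i (wr m') := by
          rw [husum, map_sum]
          simp [smul_eq_mul]
        rw [h0] at hthis
        calc ∑ m', u m' * S m' i = ∑ m', u m' * ps i (wr m') := by
              apply Finset.sum_congr rfl
              intro m' _
              rw [hps_eval i m']
          _ = 0 := hthis.symm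
      have hterm : ∀ m' ∈ Finset.univ, (0:ℝ) ≤ u m' * S m' i :=
        fun m' _ => mul_nonneg (hu0 m') (hS0 m' i)
      have := (Finset.sum_eq_zero_iff_of_nonneg hterm).1 hz m (Finset.mem_univ m)
      rcases mul_eq_zero.1 this with h | h
      · exact absurd h (ne_of_gt hum_pos)
      · exact h
    -- wr m = S m i0 • ws i0
    have hwr : wr m = S m i0 • ws i0 := by
      rw [hSsum m, Finset.sum_eq_single i0]
      · intro i _ hne
        rw [hSoff i hne, zero_smul]
      · intro h
        exact absurd (Finset.mem_univ i0) h
    -- integrality pins the scalar to 1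
    obtain ⟨z1, hz1⟩ := hints i0 m
    obtain ⟨z2, hz2⟩ := hintr m i0
    have hz1v : (z1 : ℝ) = S m i0 := by rw [← hz1, hps_eval]
    have hz2v : (z2 : ℝ) = pr m (ws i0) := hz2.symm
    have hprod : (z1 : ℝ) * (z2 : ℝ) = 1 := by
      rw [hz1v, hz2v]
      have : pr m (wr m) = 1 := by rw [hdr]; simp
      rw [hwr, map_smul, smul_eq_mul] at this
      linarith [this]
    have hz1pos : 0 < z1 := by
      have : (0:ℝ) < (z1:ℝ) := by rw [hz1v]; exact hSpos
      exact_mod_cast this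
    have hz2pos : 0 < z2 := by
      have h2 : (z2 : ℝ) ≠ 0 := by rw [hz2v]; exact hprpos
      have hz2ne : z2 ≠ 0 := by exact_mod_cast h2
      rcases lt_trichotomy z2 0 with h | h | h
      · exfalso
        have : (z1 : ℝ) * (z2 : ℝ) ≤ 0 := by
          apply mul_nonpos_of_nonneg_of_nonpos
          · exact_mod_cast hz1pos.le
          · exact_mod_cast h.le
        linarith [hprod]
      · exact absurd h hz2ne
      · exact h
    have hzint : z1 * z2 = 1 := by
      have : ((z1 * z2 : ℤ) : ℝ) = ((1 : ℤ) : ℝ) := by push_cast; linarith [hprod]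
      exact_mod_cast this
    have hz1one : z1 = 1 := by nlinarith [hz1pos, hz2pos, hzint]
    have hS1 : S m i0 = 1 := by
      rw [← hz1v, hz1one]
      norm_num
    refine ⟨i0, ?_⟩
    rw [hwr, hS1, one_smul]
  choose μ hμ using hmain
  refine ⟨μ, ?_, hμ⟩
  intro m m' hmm
  have : wr m = wr m' := by rw [hμ m, hμ m', hmm]
  have h1 : pr m (wr m') = 1 := by rw [← this, hdr]; simp
  rw [hdr] at h1
  by_contra hne
  rw [if_neg (Ne.symm hne)] at h1
  exact zero_ne_one h1

lemma Tt_zero {m : ℕ} (src tgt : Fin m → Fin n) :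
    Tt src tgt (fun _ => (0:ℝ)) = fun _ => (0:ℝ) := by
  funext j
  rw [Tt]
  split <;> rfl

end PSAux


open PSAux in
/-- Let `Σ` be a complete unimodular fan in `ℝⁿ`, with cones
`cone σ` indexed by a finite type and generated by primitive generators `v σ 1, …,
v σ (k σ)` forming part of a lattice basis.  For each cone let `Cc σ` be the
parallelepiped `{∑ tᵢ • vᵢ : tᵢ ∈ [0,1]}`.  Then the union
`pStar = ⋃_σ Cc σ` is a compact neighbourhood of the origin that is star-shaped with
respect to `0`, and the collection of the `Cc σ` together with their faces forms a
polyhedral complex covering it. -/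
theorem pStar_of_complete_unimodular_fan {n : ℕ} {ι : Type*} [Fintype ι]
    (k : ι → ℕ) (v : ∀ σ : ι, Fin (k σ) → (Fin n → ℤ))
    (huni : ∀ σ, ∃ (b : Module.Basis (Fin n) ℤ (Fin n → ℤ)) (inj : Fin (k σ) ↪ Fin n),
      ∀ i, b (inj i) = v σ i)
    (cone : ι → Set (Fin n → ℝ))
    (hcone : ∀ σ, cone σ = {x | ∃ t : Fin (k σ) → ℝ, (∀ i, 0 ≤ t i) ∧
      x = ∑ i, t i • (fun j => (v σ i j : ℝ))})
    (hfan : IsFan {C | ∃ σ, C = cone σ})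
    (hcomplete : (⋃ σ, cone σ) = Set.univ)
    (Cc : ι → Set (Fin n → ℝ))
    (hC : ∀ σ, Cc σ = {x | ∃ t : Fin (k σ) → ℝ, (∀ i, 0 ≤ t i ∧ t i ≤ 1) ∧
      x = ∑ i, t i • (fun j => (v σ i j : ℝ))})
    (pStar : Set (Fin n → ℝ)) (hp : pStar = ⋃ σ, Cc σ) :
    IsCompact pStar ∧ pStar ∈ nhds (0 : Fin n → ℝ) ∧
      (∀ x ∈ pStar, ∀ t : ℝ, 0 ≤ t → t ≤ 1 → t • x ∈ pStar) ∧
      IsPolyComplex {F : Set (Fin n → ℝ) | (∃ σ, IsFaceOf F (Cc σ)) ∧ F.Nonempty} ∧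
      ⋃₀ {F : Set (Fin n → ℝ) | (∃ σ, IsFaceOf F (Cc σ)) ∧ F.Nonempty} = pStar := by
  
  classical
  subst hp
  choose b inj hbi using huni
  choose B hBapp hBrepr using fun σ => PSAux.exists_real_basis (b σ)
  -- the real generators
  have hw : ∀ σ i, B σ (inj σ i) = fun j => ((v σ i j : ℤ) : ℝ) := by
    intro σ i
    funext j'
    rw [hBapp σ (inj σ i)]
    simp only [hbi σ i]
  set L0 : Fin n → ℝ := fun _ => 0 with hL0d
  set Ind : ι → Fin n → ℝ := fun σ j => if ∃ i, inj σ i = j then (1:ℝ) else 0 with hIndd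
  have hIndon : ∀ σ i, Ind σ (inj σ i) = 1 := fun σ i => if_pos ⟨i, rfl⟩
  have hIndoff : ∀ σ j, (∀ i, inj σ i ≠ j) → Ind σ j = 0 :=
    fun σ j hj => if_neg (fun ⟨i, hi⟩ => hj i hi)
  have hL0Ind : ∀ σ, ∀ j, L0 j ≤ Ind σ j := by
    intro σ j
    rw [hIndd, hL0d]
    dsimp only
    split <;> norm_num
  -- cubes as boxes
  have hbox : ∀ σ, Cc σ = PSAux.Box (B σ) L0 (Ind σ) := by
    intro σ
    rw [hC σ]
    ext x
    rw [PSAux.mem_box_iff_sum (B σ) (inj σ).injective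
      (fun j hj => ⟨rfl, hIndoff σ j hj⟩) x]
    simp only [Set.mem_setOf_eq]
    constructor
    · rintro ⟨t, ht, rfl⟩
      refine ⟨t, fun i => ?_, ?_⟩
      · rw [hIndon σ i]
        exact ⟨(ht i).1, (ht i).2⟩
      · apply Finset.sum_congr rfl
        intro i _
        rw [hw σ i]
    · rintro ⟨t, ht, rfl⟩
      refine ⟨t, fun i => ?_, ?_⟩
      · have := ht i
        rw [hIndon σ i] at this
        exact ⟨this.1, this.2⟩
      · apply Finset.sum_congr rfl
        intro i _
        rw [hw σ i]
  -- membership of zero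
  have hzero_Cc : ∀ σ, (0 : Fin n → ℝ) ∈ Cc σ := by
    intro σ
    rw [hC σ]
    exact ⟨fun _ => 0, fun i => ⟨le_rfl, zero_le_one⟩, by simp⟩
  have hzero_cone : ∀ σ, (0 : Fin n → ℝ) ∈ cone σ := by
    intro σ
    rw [hcone σ]
    exact ⟨fun _ => 0, fun i => le_rfl, by simp⟩
  have hCc_cone : ∀ σ, Cc σ ⊆ cone σ := by
    intro σ x hx
    rw [hC σ] at hx
    rw [hcone σ]
    obtain ⟨t, ht, rfl⟩ := hx
    exact ⟨t, fun i => (ht i).1, rfl⟩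
  -- faces of cubes are boxes, boxes are faces
  have hface_box : ∀ σ (F : Set (Fin n → ℝ)), IsFaceOf F (Cc σ) → F.Nonempty →
      ∃ l h, PSAux.Sub L0 (Ind σ) l h ∧ F = PSAux.Box (B σ) l h := by
    intro σ F hF hne
    rw [hbox σ] at hF
    exact PSAux.sub_of_face (B σ) (hL0Ind σ) hF hne
  have hbox_face : ∀ σ (l h : Fin n → ℝ), PSAux.Sub L0 (Ind σ) l h →
      IsFaceOf (PSAux.Box (B σ) l h) (Cc σ) := by
    intro σ l h hs
    rw [hbox σ]
    exact PSAux.face_of_sub (B σ) (hL0Ind σ) hs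
  have hface_subset : ∀ (F P : Set (Fin n → ℝ)), IsFaceOf F P → F ⊆ P := by
    rintro F P (rfl | ⟨ℓ, c, _, rfl⟩)
    · exact subset_rfl
    · exact fun x hx => hx.1
  -- PART 1 : compactness
  have h5 : ⋃₀ {F : Set (Fin n → ℝ) | (∃ σ, IsFaceOf F (Cc σ)) ∧ F.Nonempty} = ⋃ σ, Cc σ := by
    apply Set.Subset.antisymm
    · rintro x ⟨F, ⟨⟨σ, hF⟩, _⟩, hxF⟩
      exact Set.mem_iUnion.2 ⟨σ, hface_subset F (Cc σ) hF hxF⟩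
    · intro x hx
      obtain ⟨σ, hσ⟩ := Set.mem_iUnion.1 hx
      exact ⟨Cc σ, ⟨⟨σ, Or.inl rfl⟩, ⟨0, hzero_Cc σ⟩⟩, hσ⟩
  have h1 : IsCompact (⋃ σ, Cc σ) := by
    apply isCompact_iUnion
    intro σ
    have himg : Cc σ = (fun t : Fin (k σ) → ℝ => ∑ i, t i • (fun j => ((v σ i j : ℤ) : ℝ))) ''
        (Set.univ.pi fun _ => Set.Icc (0:ℝ) 1) := by
      rw [hC σ]
      ext x
      simp only [Set.mem_image, Set.mem_pi, Set.mem_univ, Set.mem_Icc, true_implies,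
        Set.mem_setOf_eq]
      constructor
      · rintro ⟨t, ht, rfl⟩
        exact ⟨t, ht, rfl⟩
      · rintro ⟨t, ht, rfl⟩
        exact ⟨t, ht, rfl⟩
    rw [himg]
    apply IsCompact.image
    · exact isCompact_univ_pi fun _ => isCompact_Icc
    · apply continuous_finset_sum
      intro i _
      exact (continuous_apply i).smul continuous_const
  -- PART 2 : neighbourhood of zero
  have h2 : (⋃ σ, Cc σ) ∈ nhds (0 : Fin n → ℝ) := by
    have hUnhds : (⋂ σ, ⋂ j, ((B σ).coord j) ⁻¹' Set.Icc (-1:ℝ) 1) ∈ nhds (0 : Fin n → ℝ) := by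
      rw [Filter.iInter_mem]
      intro σ
      rw [Filter.iInter_mem]
      intro j
      have hc : Continuous ((B σ).coord j) := LinearMap.continuous_of_finiteDimensional _
      have h0 : ((B σ).coord j) 0 = 0 := map_zero _
      have : Set.Icc (-1:ℝ) 1 ∈ nhds (((B σ).coord j) (0 : Fin n → ℝ)) := by
        rw [h0]
        exact Icc_mem_nhds (by norm_num) (by norm_num)
      exact hc.continuousAt.preimage_mem_nhds this
    apply Filter.mem_of_superset hUnhds
    intro x hxU
    have hx : x ∈ ⋃ σ, cone σ := by
      rw [hcomplete]
      trivial
    obtain ⟨σ, hσ⟩ := Set.mem_iUnion.1 hx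
    rw [hcone σ] at hσ
    obtain ⟨t, ht0, hteq⟩ := hσ
    have hxB : x = ∑ i, t i • B σ (inj σ i) := by
      rw [hteq]
      apply Finset.sum_congr rfl
      intro i _
      rw [hw σ i]
    have hrepr : ∀ i, (B σ).repr x (inj σ i) = t i := by
      intro i
      rw [hxB, PSAux.repr_sum_apply, Finset.sum_eq_single i]
      · rw [if_pos rfl]
      · intro i' _ hne
        rw [if_neg (fun hh => hne ((inj σ).injective hh))]
      · intro hna
        exact absurd (Finset.mem_univ i) hna
    apply Set.mem_iUnion.2
    refine ⟨σ, ?_⟩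
    rw [hC σ]
    refine ⟨t, fun i => ⟨ht0 i, ?_⟩, hteq⟩
    have hmem := Set.mem_iInter.1 (Set.mem_iInter.1 hxU σ) (inj σ i)
    simp only [Set.mem_preimage, Set.mem_Icc, Module.Basis.coord_apply] at hmem
    rw [hrepr i] at hmem
    exact hmem.2
  -- PART 3 : star-shaped
  have h3 : ∀ x ∈ ⋃ σ, Cc σ, ∀ c : ℝ, 0 ≤ c → c ≤ 1 → c • x ∈ ⋃ σ, Cc σ := by
    intro x hx c hc0 hc1
    obtain ⟨σ, hσ⟩ := Set.mem_iUnion.1 hx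
    rw [hC σ] at hσ
    obtain ⟨t, ht, rfl⟩ := hσ
    apply Set.mem_iUnion.2
    refine ⟨σ, ?_⟩
    rw [hC σ]
    refine ⟨fun i => c * t i, fun i => ⟨mul_nonneg hc0 (ht i).1, ?_⟩, ?_⟩
    · have := mul_le_mul hc1 (ht i).2 (ht i).1 zero_le_one
      simpa using this
    · rw [Finset.smul_sum]
      apply Finset.sum_congr rfl
      intro i _
      rw [smul_smul]
  refine ⟨h1, h2, h3, ⟨?_, ?_, ?_⟩, h5⟩
  · -- polyhedra
    rintro P ⟨⟨σ, hPface⟩, hPne⟩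
    obtain ⟨l, h, hPsub, rfl⟩ := hface_box σ P hPface hPne
    exact PSAux.isPolyhedron_box (B σ) (fun j => (PSAux.sub_bounds (hL0Ind σ) hPsub j).2.1)
  · -- closed under faces
    rintro P ⟨⟨σ, hPface⟩, hPne⟩ F hFface hFne
    obtain ⟨l, h, hPsub, rfl⟩ := hface_box σ P hPface hPne
    obtain ⟨l', h', hFsub, rfl⟩ := PSAux.sub_of_face (B σ)
      (fun j => (PSAux.sub_bounds (hL0Ind σ) hPsub j).2.1) hFface hFne
    exact ⟨⟨σ, hbox_face σ l' h' (hPsub.trans hFsub)⟩, hFne⟩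
  · -- intersections
    obtain ⟨⟨hfan1, hfan2, hfan3⟩, hfan4⟩ := hfan
    have hw_cone : ∀ σ i, (fun j => ((v σ i j : ℤ) : ℝ)) ∈ cone σ := by
      intro σ i
      rw [hcone σ]
      refine ⟨fun i' => if i' = i then 1 else 0, fun i' => by positivity, ?_⟩
      symm
      rw [Finset.sum_eq_single i]
      · simp
      · intro i' _ hne
        simp [hne]
      · intro hna
        exact absurd (Finset.mem_univ i) hna
    have hmatch : ∀ ρ σ, IsFaceOf (cone ρ) (cone σ) →
        ∃ μ : Fin (k ρ) → Fin (k σ), Function.Injective μ ∧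
          ∀ m, (fun j => ((v ρ m j : ℤ) : ℝ)) = ((fun j => ((v σ (μ m) j : ℤ) : ℝ)) : Fin n → ℝ) := by
      intro ρ σ hfc
      have hl0ex : ∃ l0 : (Fin n → ℝ) →ₗ[ℝ] ℝ,
          (∀ i, l0 (fun j => ((v σ i j : ℤ) : ℝ)) ≤ 0) ∧
          cone ρ = {x | x ∈ cone σ ∧ l0 x = 0} := by
        rcases hfc with heq | ⟨ℓ, cc, hle, heqset⟩
        · refine ⟨0, fun i => le_rfl, ?_⟩
          rw [heq]
          ext x
          simp
        · have hc0 : cc = 0 := by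
            have h0ρ := hzero_cone ρ
            rw [heqset] at h0ρ
            have hz := h0ρ.2
            rw [map_zero] at hz
            exact hz.symm
          refine ⟨ℓ, fun i => ?_, ?_⟩
          · have := hle _ (hw_cone σ i)
            rwa [hc0] at this
          · rw [heqset, hc0]
      obtain ⟨l0, hl00, hsub0⟩ := hl0ex
      apply PSAux.matching (fun m => ((fun j => ((v ρ m j : ℤ) : ℝ)) : Fin n → ℝ))
        (fun i => ((fun j => ((v σ i j : ℤ) : ℝ)) : Fin n → ℝ))
        (fun m => (B ρ).coord (inj ρ m)) (fun i => (B σ).coord (inj σ i))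
        ?_ ?_ ?_ ?_ (cone ρ) (cone σ) (hcone ρ) (hcone σ) l0 hl00 hsub0
      · intro m m'
        beta_reduce
        rw [Module.Basis.coord_apply, ← hw ρ m', Module.Basis.repr_self, Finsupp.single_apply]
        by_cases hmm : m' = m
        · rw [if_pos (by rw [hmm]), if_pos hmm]
        · rw [if_neg (fun hh => hmm ((inj ρ).injective hh)), if_neg hmm]
      · intro i i'
        beta_reduce
        rw [Module.Basis.coord_apply, ← hw σ i', Module.Basis.repr_self, Finsupp.single_apply]
        by_cases hii : i' = i
        · rw [if_pos (by rw [hii]), if_pos hii]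
        · rw [if_neg (fun hh => hii ((inj σ).injective hh)), if_neg hii]
      · intro m i
        exact ⟨(b ρ).repr (v σ i) (inj ρ m), by
          beta_reduce
          rw [Module.Basis.coord_apply, hBrepr ρ (v σ i) (inj ρ m)]⟩
      · intro i m
        exact ⟨(b σ).repr (v ρ m) (inj σ i), by
          beta_reduce
          rw [Module.Basis.coord_apply, hBrepr σ (v ρ m) (inj σ i)]⟩
    have hpair : ∀ σ τ, ∃ ρ, cone σ ∩ cone τ = cone ρ ∧
        ∃ (μσ : Fin (k ρ) → Fin (k σ)) (μτ : Fin (k ρ) → Fin (k τ)),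
          Function.Injective μσ ∧
          (∀ m, (fun j => ((v ρ m j : ℤ) : ℝ)) = ((fun j => ((v σ (μσ m) j : ℤ) : ℝ)) : Fin n → ℝ)) ∧
          Function.Injective μτ ∧
          (∀ m, (fun j => ((v ρ m j : ℤ) : ℝ)) = ((fun j => ((v τ (μτ m) j : ℤ) : ℝ)) : Fin n → ℝ)) := by
      intro σ τ
      have hne : (cone σ ∩ cone τ).Nonempty := ⟨0, hzero_cone σ, hzero_cone τ⟩
      have hfaces := hfan3 (cone σ) ⟨σ, rfl⟩ (cone τ) ⟨τ, rfl⟩ hne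
      obtain ⟨ρ, hρ⟩ := hfan2 (cone σ) ⟨σ, rfl⟩ _ hfaces.1 hne
      have hfρσ : IsFaceOf (cone ρ) (cone σ) := hρ ▸ hfaces.1
      have hfρτ : IsFaceOf (cone ρ) (cone τ) := hρ ▸ hfaces.2
      obtain ⟨μσ, hiσ, hwσ⟩ := hmatch ρ σ hfρσ
      obtain ⟨μτ, hiτ, hwτ⟩ := hmatch ρ τ hfρτ
      exact ⟨ρ, hρ, μσ, μτ, hiσ, hwσ, hiτ, hwτ⟩
    have hw_eq : ∀ σ ρ (μ : Fin (k ρ) → Fin (k σ)),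
        (∀ m, (fun j => ((v ρ m j : ℤ) : ℝ)) = ((fun j => ((v σ (μ m) j : ℤ) : ℝ)) : Fin n → ℝ)) →
        ∀ m, B ρ (inj ρ m) = B σ (inj σ (μ m)) := by
      intro σ ρ μ hμ m
      rw [hw ρ m, hw σ (μ m)]
      exact hμ m
    have hDbox : ∀ σ ρ (μ : Fin (k ρ) → Fin (k σ)), Function.Injective μ →
        (∀ m, B ρ (inj ρ m) = B σ (inj σ (μ m))) →
        Cc ρ = PSAux.Box (B σ) L0 (PSAux.Tt (inj ρ) (fun m => inj σ (μ m)) (Ind ρ)) := by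
      intro σ ρ μ hinjμ hBeq
      have hfinj : Function.Injective (fun m => inj σ (μ m)) :=
        fun a b hab => hinjμ ((inj σ).injective hab)
      rw [hbox ρ]
      rw [PSAux.box_transfer (B ρ) (B σ) (inj ρ).injective hfinj hBeq
        (fun j hj => ⟨rfl, hIndoff ρ j hj⟩)]
      rw [show PSAux.Tt (⇑(inj ρ)) (fun m => (inj σ) (μ m)) L0 = L0 from PSAux.Tt_zero _ _]
    have hDsub : ∀ σ ρ (μ : Fin (k ρ) → Fin (k σ)), Function.Injective μ →
        PSAux.Sub L0 (Ind σ) L0 (PSAux.Tt (inj ρ) (fun m => inj σ (μ m)) (Ind ρ)) := by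
      intro σ ρ μ hinjμ
      have hfinj : Function.Injective (fun m => inj σ (μ m)) :=
        fun a b hab => hinjμ ((inj σ).injective hab)
      intro j
      by_cases hj : ∃ m, inj σ (μ m) = j
      · left
        obtain ⟨m, rfl⟩ := hj
        refine ⟨rfl, ?_⟩
        rw [PSAux.Tt_apply hfinj (Ind ρ) m, hIndon ρ m, hIndon σ (μ m)]
      · right; left
        push_neg at hj
        refine ⟨rfl, ?_⟩
        rw [PSAux.Tt_off hj]
    have hcubes : ∀ σ τ ρ (μσ : Fin (k ρ) → Fin (k σ)) (μτ : Fin (k ρ) → Fin (k τ)),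
        cone σ ∩ cone τ = cone ρ →
        Function.Injective μσ → (∀ m, B ρ (inj ρ m) = B σ (inj σ (μσ m))) →
        Function.Injective μτ → (∀ m, B ρ (inj ρ m) = B τ (inj τ (μτ m))) →
        Cc σ ∩ Cc τ = Cc ρ := by
      intro σ τ ρ μσ μτ hconeeq hiσ hBσ hiτ hBτ
      apply Set.Subset.antisymm
      · rintro x ⟨hxσ, hxτ⟩
        have hxcone : x ∈ cone ρ := by
          rw [← hconeeq]
          exact ⟨hCc_cone σ hxσ, hCc_cone τ hxτ⟩
        rw [hcone ρ] at hxcone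
        obtain ⟨u, hu0, hueq⟩ := hxcone
        rw [hC σ] at hxσ
        obtain ⟨t, ht, hteq⟩ := hxσ
        have hxBu : x = ∑ m, u m • B σ (inj σ (μσ m)) := by
          rw [hueq]
          apply Finset.sum_congr rfl
          intro m _
          rw [← hBσ m, hw ρ m]
        have hxBt : x = ∑ i, t i • B σ (inj σ i) := by
          rw [hteq]
          apply Finset.sum_congr rfl
          intro i _
          rw [hw σ i]
        have hfinj : Function.Injective (fun m => inj σ (μσ m)) :=
          fun a b hab => hiσ ((inj σ).injective hab)
        have hcoord : ∀ m, u m = t (μσ m) := by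
          intro m
          have hr1 : (B σ).repr x (inj σ (μσ m)) = u m := by
            rw [hxBu, PSAux.repr_sum_apply, Finset.sum_eq_single m]
            · rw [if_pos rfl]
            · intro m' _ hne
              rw [if_neg (fun hh => hne (hfinj hh))]
            · intro hna
              exact absurd (Finset.mem_univ m) hna
          have hr2 : (B σ).repr x (inj σ (μσ m)) = t (μσ m) := by
            rw [hxBt, PSAux.repr_sum_apply, Finset.sum_eq_single (μσ m)]
            · rw [if_pos rfl]
            · intro i' _ hne
              rw [if_neg (fun hh => hne ((inj σ).injective hh))]
            · intro hna
              exact absurd (Finset.mem_univ (μσ m)) hna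
          rw [← hr1, hr2]
        rw [hC ρ]
        refine ⟨u, fun m => ⟨hu0 m, ?_⟩, hueq⟩
        rw [hcoord m]
        exact (ht (μσ m)).2
      · intro x hx
        constructor
        · rw [hDbox σ ρ μσ hiσ hBσ] at hx
          rw [hbox σ]
          exact PSAux.box_subset (hL0Ind σ) (hDsub σ ρ μσ hiσ) hx
        · rw [hDbox τ ρ μτ hiτ hBτ] at hx
          rw [hbox τ]
          exact PSAux.box_subset (hL0Ind τ) (hDsub τ ρ μτ hiτ) hx
    -- main intersection argument
    rintro P ⟨⟨σ, hPface⟩, hPne⟩ Q ⟨⟨τ, hQface⟩, hQne⟩ hPQne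
    obtain ⟨f1, f2, hPsub, hPeq⟩ := hface_box σ P hPface hPne
    obtain ⟨g1, g2, hQsub, hQeq⟩ := hface_box τ Q hQface hQne
    obtain ⟨ρ, hconeeq, μσ, μτ, hiσ, hwσ, hiτ, hwτ⟩ := hpair σ τ
    have hBσ : ∀ m, B ρ (inj ρ m) = B σ (inj σ (μσ m)) := hw_eq σ ρ μσ hwσ
    have hBτ : ∀ m, B ρ (inj ρ m) = B τ (inj τ (μτ m)) := hw_eq τ ρ μτ hwτ
    have hD : Cc σ ∩ Cc τ = Cc ρ := hcubes σ τ ρ μσ μτ hconeeq hiσ hBσ hiτ hBτ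
    set fσ : Fin (k ρ) → Fin n := fun m => inj σ (μσ m) with hfσd
    set fτ : Fin (k ρ) → Fin n := fun m => inj τ (μτ m) with hfτd
    have hfσinj : Function.Injective fσ := fun a b hab => hiσ ((inj σ).injective hab)
    have hfτinj : Function.Injective fτ := fun a b hab => hiτ ((inj τ).injective hab)
    set dσ := PSAux.Tt (inj ρ) fσ (Ind ρ) with hdσd
    set dτ := PSAux.Tt (inj ρ) fτ (Ind ρ) with hdτd
    have hDσ : Cc ρ = PSAux.Box (B σ) L0 dσ := hDbox σ ρ μσ hiσ hBσ
    have hDτ : Cc ρ = PSAux.Box (B τ) L0 dτ := hDbox τ ρ μτ hiτ hBτ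
    have hPQsubD : P ∩ Q ⊆ Cc ρ := by
      intro x hxPQ
      rw [← hD]
      exact ⟨hface_subset P (Cc σ) hPface hxPQ.1, hface_subset Q (Cc τ) hQface hxPQ.2⟩
    set mσl : Fin n → ℝ := fun j => max (f1 j) (L0 j) with hmσld
    set mσh : Fin n → ℝ := fun j => min (f2 j) (dσ j) with hmσhd
    set mτl : Fin n → ℝ := fun j => max (g1 j) (L0 j) with hmτld
    set mτh : Fin n → ℝ := fun j => min (g2 j) (dτ j) with hmτhd
    have hPD : P ∩ Cc ρ = PSAux.Box (B σ) mσl mσh := by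
      rw [hPeq, hDσ, PSAux.box_inter]
    have hQD : Q ∩ Cc ρ = PSAux.Box (B τ) mτl mτh := by
      rw [hQeq, hDτ, PSAux.box_inter]
    have hPDne : (PSAux.Box (B σ) f1 f2 ∩ PSAux.Box (B σ) L0 dσ).Nonempty := by
      obtain ⟨x, hx⟩ := hPQne
      exact ⟨x, by rw [← hPeq]; exact hx.1, by rw [← hDσ]; exact hPQsubD hx⟩
    have hQDne : (PSAux.Box (B τ) g1 g2 ∩ PSAux.Box (B τ) L0 dτ).Nonempty := by
      obtain ⟨x, hx⟩ := hPQne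
      exact ⟨x, by rw [← hQeq]; exact hx.2, by rw [← hDτ]; exact hPQsubD hx⟩
    have hsubσ := PSAux.sub_inter (hL0Ind σ) hPsub (hDsub σ ρ μσ hiσ)
      (PSAux.box_nonempty_compat hPDne)
    have hsubτ := PSAux.sub_inter (hL0Ind τ) hQsub (hDsub τ ρ μτ hiτ)
      (PSAux.box_nonempty_compat hQDne)
    have hsuppσ : ∀ j, (∀ m, fσ m ≠ j) → mσl j = 0 ∧ mσh j = 0 := by
      intro j hj
      exact PSAux.sub_supp hsubσ.2 rfl (PSAux.Tt_off hj (Ind ρ))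
    have hsuppτ : ∀ j, (∀ m, fτ m ≠ j) → mτl j = 0 ∧ mτh j = 0 := by
      intro j hj
      exact PSAux.sub_supp hsubτ.2 rfl (PSAux.Tt_off hj (Ind ρ))
    set aσl := PSAux.Tt fσ (inj ρ) mσl with haσld
    set aσh := PSAux.Tt fσ (inj ρ) mσh with haσhd
    set aτl := PSAux.Tt fτ (inj ρ) mτl with haτld
    set aτh := PSAux.Tt fτ (inj ρ) mτh with haτhd
    have hPDρ : P ∩ Cc ρ = PSAux.Box (B ρ) aσl aσh := by
      rw [hPD]
      exact PSAux.box_transfer (B σ) (B ρ) hfσinj (inj ρ).injective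
        (fun m => (hBσ m).symm) hsuppσ
    have hQDρ : Q ∩ Cc ρ = PSAux.Box (B ρ) aτl aτh := by
      rw [hQD]
      exact PSAux.box_transfer (B τ) (B ρ) hfτinj (inj ρ).injective
        (fun m => (hBτ m).symm) hsuppτ
    have hTtLσ : PSAux.Tt fσ (inj ρ) L0 = L0 := by
      rw [hL0d]
      exact PSAux.Tt_zero _ _
    have hTtLτ : PSAux.Tt fτ (inj ρ) L0 = L0 := by
      rw [hL0d]
      exact PSAux.Tt_zero _ _
    have hTtdσ : PSAux.Tt fσ (inj ρ) dσ = Ind ρ := by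
      rw [hdσd]
      exact PSAux.Tt_comp (inj ρ).injective hfσinj (Ind ρ) (fun j hj => hIndoff ρ j hj)
    have hTtdτ : PSAux.Tt fτ (inj ρ) dτ = Ind ρ := by
      rw [hdτd]
      exact PSAux.Tt_comp (inj ρ).injective hfτinj (Ind ρ) (fun j hj => hIndoff ρ j hj)
    have hsubaρ : PSAux.Sub L0 (Ind ρ) aσl aσh := by
      have := PSAux.Tt_sub (f := fσ) (inj ρ).injective hsubσ.2
      rwa [hTtLσ, hTtdσ] at this
    have hsubbρ : PSAux.Sub L0 (Ind ρ) aτl aτh := by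
      have := PSAux.Tt_sub (f := fτ) (inj ρ).injective hsubτ.2
      rwa [hTtLτ, hTtdτ] at this
    set el : Fin n → ℝ := fun j => max (aσl j) (aτl j) with held
    set eh : Fin n → ℝ := fun j => min (aσh j) (aτh j) with hehd
    have hPQρ : P ∩ Q = PSAux.Box (B ρ) el eh := by
      have hsplit : P ∩ Q = (P ∩ Cc ρ) ∩ (Q ∩ Cc ρ) := by
        ext x
        constructor
        · intro hx
          exact ⟨⟨hx.1, hPQsubD hx⟩, hx.2, hPQsubD hx⟩
        · rintro ⟨⟨hx1, _⟩, hx2, _⟩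
          exact ⟨hx1, hx2⟩
      rw [hsplit, hPDρ, hQDρ, PSAux.box_inter]
    have hnePQρ : (PSAux.Box (B ρ) aσl aσh ∩ PSAux.Box (B ρ) aτl aτh).Nonempty := by
      obtain ⟨x, hx⟩ := hPQne
      exact ⟨x, by rw [← hPDρ]; exact ⟨hx.1, hPQsubD hx⟩,
        by rw [← hQDρ]; exact ⟨hx.2, hPQsubD hx⟩⟩
    have hsubρ := PSAux.sub_inter (hL0Ind ρ) hsubaρ hsubbρ (PSAux.box_nonempty_compat hnePQρ)
    have hsubcube_e : PSAux.Sub L0 (Ind ρ) el eh := hsubaρ.trans hsubρ.1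
    have hsupp_e : ∀ j, (∀ m, inj ρ m ≠ j) → el j = 0 ∧ eh j = 0 := fun j hj =>
      PSAux.sub_supp hsubcube_e rfl (hIndoff ρ j hj)
    have hPQσ : P ∩ Q = PSAux.Box (B σ) (PSAux.Tt (inj ρ) fσ el) (PSAux.Tt (inj ρ) fσ eh) := by
      rw [hPQρ]
      exact PSAux.box_transfer (B ρ) (B σ) (inj ρ).injective hfσinj hBσ hsupp_e
    have hPQτ : P ∩ Q = PSAux.Box (B τ) (PSAux.Tt (inj ρ) fτ el) (PSAux.Tt (inj ρ) fτ eh) := by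
      rw [hPQρ]
      exact PSAux.box_transfer (B ρ) (B τ) (inj ρ).injective hfτinj hBτ hsupp_e
    have hTtaσl : PSAux.Tt (inj ρ) fσ aσl = mσl := by
      rw [haσld]
      exact PSAux.Tt_comp hfσinj (inj ρ).injective mσl (fun j hj => (hsuppσ j hj).1)
    have hTtaσh : PSAux.Tt (inj ρ) fσ aσh = mσh := by
      rw [haσhd]
      exact PSAux.Tt_comp hfσinj (inj ρ).injective mσh (fun j hj => (hsuppσ j hj).2)
    have hTtaτl : PSAux.Tt (inj ρ) fτ aτl = mτl := by
      rw [haτld]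
      exact PSAux.Tt_comp hfτinj (inj ρ).injective mτl (fun j hj => (hsuppτ j hj).1)
    have hTtaτh : PSAux.Tt (inj ρ) fτ aτh = mτh := by
      rw [haτhd]
      exact PSAux.Tt_comp hfτinj (inj ρ).injective mτh (fun j hj => (hsuppτ j hj).2)
    have hsubfinalσ : PSAux.Sub f1 f2 (PSAux.Tt (inj ρ) fσ el) (PSAux.Tt (inj ρ) fσ eh) := by
      have h2' := PSAux.Tt_sub (f := ⇑(inj ρ)) hfσinj hsubρ.1
      rw [hTtaσl, hTtaσh] at h2'
      exact hsubσ.1.trans h2'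
    have hsubfinalτ : PSAux.Sub g1 g2 (PSAux.Tt (inj ρ) fτ el) (PSAux.Tt (inj ρ) fτ eh) := by
      have h2' := PSAux.Tt_sub (f := ⇑(inj ρ)) hfτinj hsubρ.2
      rw [hTtaτl, hTtaτh] at h2'
      exact hsubτ.1.trans h2'
    constructor
    · rw [hPQσ, hPeq]
      exact PSAux.face_of_sub (B σ)
        (fun j => (PSAux.sub_bounds (hL0Ind σ) hPsub j).2.1) hsubfinalσ
    · rw [hPQτ, hQeq]
      exact PSAux.face_of_sub (B τ)
        (fun j => (PSAux.sub_bounds (hL0Ind τ) hQsub j).2.1) hsubfinalτ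
end
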